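/- arXiv:1607.07833 — 4 statements merged into one kernel-verified Lean document; each statement's English description precedes it below -/
import Mathlib

section
/- Assume the ladder system (L_α : α ∈ S) has the uniformization property. Let 𝔐 be the L-structure on 𝐉 = J₀ ⊗ 2^{≤ω} defined analogously to 𝔄 on J. For any sequence 𝔉 = (f_α : α ∈ S) with each f_α ∈ 2^ω, let J_𝔉 consist of X = {η ∈ J : lg(η) < ω} together with all pairs (ν_α, η₁) ∈ 𝐉 where η₁ differs from f_α at only finitely many places, and let 𝔄_𝔉 be the substructure of 𝔐 with domain J_𝔉. Then 𝔄_𝔉 is isomorphic to 𝔄. -/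
namespace LadderPaper

open FirstOrder FirstOrder.Language Cardinal

noncomputable section

/-- The first uncountable ordinal. -/
def ω₁ : Ordinal.{0} := (Cardinal.aleph 1).ord

/-- `C` is a club (closed unbounded) subset of `ω₁`. -/
def IsClubBelow (C : Set Ordinal.{0}) : Prop :=
  C ⊆ Set.Iio ω₁ ∧ (∀ α < ω₁, ∃ β ∈ C, α ≤ β) ∧
    ∀ α < ω₁, Order.IsSuccLimit α → (∀ β < α, ∃ γ ∈ C, β ≤ γ ∧ γ < α) → α ∈ C

/-- `S` is a stationary subset of `ω₁`. -/
def IsStationaryBelow (S : Set Ordinal.{0}) : Prop :=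
  S ⊆ Set.Iio ω₁ ∧ ∀ C, IsClubBelow C → (S ∩ C).Nonempty

/-- `ν` gives a ladder system on `S`:  for `α ∈ S`, `ν α` is the strictly increasing
enumeration of a cofinal subset `L_α ⊆ α` of order type `ω`. -/
def IsLadderSystem (S : Set Ordinal.{0}) (ν : Ordinal.{0} → ℕ → Ordinal.{0}) : Prop :=
  ∀ α ∈ S, StrictMono (ν α) ∧ (∀ n, ν α n < α) ∧ ∀ β < α, ∃ n, β ≤ ν α n

/-- The ladder system `(range (ν α) : α ∈ S)` has the uniformization property:  for any
sequence of colorings `f_α : L_α → 2` (presented as `f α : ℕ → Bool` via the enumerations)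
there is `g : ω₁ → 2` agreeing with each `f_α` on all but finitely many rungs. -/
def Uniformization (S : Set Ordinal.{0}) (ν : Ordinal.{0} → ℕ → Ordinal.{0}) : Prop :=
  ∀ f : Ordinal.{0} → ℕ → Bool, ∃ g : Ordinal.{0} → Bool,
    ∀ α ∈ S, {n : ℕ | g (ν α n) ≠ f α n}.Finite

/-- Raw data for an element of the product tree `J₀ ⊗ 2^{≤ω}`: a length `≤ ω`, an ordinal
sequence and a binary sequence, with junk conventions beyond the length. -/
structure PreJ : Type 1 where
  len : ℕ∞
  ord : ℕ → Ordinal.{0}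
  bit : ℕ → Bool

/-- The junk convention: `x` is trivial beyond its length. -/
def PreJ.Reduced (x : PreJ) : Prop :=
  ∀ n : ℕ, ¬((n : ℕ∞) < x.len) → x.ord n = 0 ∧ x.bit n = false

variable (S : Set Ordinal.{0}) (ν : Ordinal.{0} → ℕ → Ordinal.{0})

/-- The first coordinate of `x` is an element of `J₀`: strictly increasing into `ω₁`, and
equal to a ladder enumeration `ν β`, `β ∈ S`, if it is infinite. -/
def PreJ.J0 (x : PreJ) : Prop :=
  (∀ m n : ℕ, m < n → ((n : ℕ∞) < x.len) → x.ord m < x.ord n) ∧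
    (∀ n : ℕ, ((n : ℕ∞) < x.len) → x.ord n < ω₁) ∧
    (x.len = ⊤ → ∃ β ∈ S, ∀ n, x.ord n = ν β n)

/-- Membership in `J = J₀ ⊗ J₁`, where `J₁ ⊆ 2^{≤ω}` consists of the finite-support
sequences. -/
def PreJ.InJ (x : PreJ) : Prop :=
  x.Reduced ∧ x.J0 S ν ∧ {n : ℕ | x.bit n = true}.Finite

/-- Membership in `𝐉 = J₀ ⊗ 2^{≤ω}`. -/
def PreJ.InJfull (x : PreJ) : Prop := x.Reduced ∧ x.J0 S ν

/-- `x` codes an element `η₀ ∈ J₀` (second coordinate constantly `false`). -/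
def PreJ.IsJ0Elem (x : PreJ) : Prop := x.Reduced ∧ x.J0 S ν ∧ ∀ n, x.bit n = false

/-- `η` and `x` have the same first coordinate (`η₀ = τ₀`). -/
def PreJ.sameFirst (η x : PreJ) : Prop := η.len = x.len ∧ η.ord = x.ord

open Classical in
/-- Restriction `η ↦ η↾α`. -/
def PreJ.restrict (x : PreJ) (α : ℕ∞) : PreJ where
  len := min α x.len
  ord n := if (n : ℕ∞) < min α x.len then x.ord n else 0
  bit n := if (n : ℕ∞) < min α x.len then x.bit n else false

/-- Pointwise mod-2 addition on second coordinates: `𝛈(τ) = (τ₀, η₁ ⊕ τ₁)`. -/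
def PreJ.addBit (η x : PreJ) : PreJ where
  len := x.len
  ord := x.ord
  bit n := xor (η.bit n) (x.bit n)

theorem PreJ.restrict_reduced (x : PreJ) (α : ℕ∞) : (x.restrict α).Reduced := by
  intro n hn
  constructor <;> simp only [PreJ.restrict] at hn ⊢ <;> rw [if_neg hn]

theorem PreJ.restrict_j0 {x : PreJ} (hx : x.J0 S ν) (hred : x.Reduced) (α : ℕ∞) :
    (x.restrict α).J0 S ν := by
  obtain ⟨h1, h2, h3⟩ := hx
  refine ⟨?_, ?_, ?_⟩
  · intro m n hmn hn
    simp only [PreJ.restrict] at hn ⊢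
    rw [if_pos hn, if_pos (lt_trans (by exact_mod_cast hmn) hn)]
    exact h1 m n hmn (lt_of_lt_of_le hn (min_le_right _ _))
  · intro n hn
    simp only [PreJ.restrict] at hn ⊢
    rw [if_pos hn]
    exact h2 n (lt_of_lt_of_le hn (min_le_right _ _))
  · intro htop
    simp only [PreJ.restrict] at htop ⊢
    rw [min_eq_top] at htop
    obtain ⟨β, hβ, hord⟩ := h3 htop.2
    refine ⟨β, hβ, fun n => ?_⟩
    simp only [PreJ.restrict, htop.1, htop.2, min_self]
    rw [if_pos (by simp [htop.2])]
    exact hord n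

theorem PreJ.restrict_inJ {x : PreJ} (hx : x.InJ S ν) (α : ℕ∞) : (x.restrict α).InJ S ν := by
  obtain ⟨hred, hj0, hfin⟩ := hx
  refine ⟨x.restrict_reduced α, PreJ.restrict_j0 S ν hj0 hred α, ?_⟩
  refine hfin.subset ?_
  intro n hn
  simp only [PreJ.restrict, Set.mem_setOf_eq] at hn ⊢
  by_cases h : (n : ℕ∞) < min α x.len
  · rwa [if_pos h] at hn
  · rw [if_neg h] at hn; exact absurd hn (by simp)

theorem PreJ.restrict_inJfull {x : PreJ} (hx : x.InJfull S ν) (α : ℕ∞) :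
    (x.restrict α).InJfull S ν :=
  ⟨x.restrict_reduced α, PreJ.restrict_j0 S ν hx.2 hx.1 α⟩

theorem PreJ.addBit_reduced {η x : PreJ} (hη : η.Reduced) (hx : x.Reduced)
    (hfirst : η.sameFirst x) : (η.addBit x).Reduced := by
  intro n hn
  simp only [PreJ.addBit] at hn ⊢
  refine ⟨(hx n hn).1, ?_⟩
  rw [(hx n hn).2, (hη n (by rwa [hfirst.1])).2]
  rfl

theorem PreJ.addBit_inJ {η x : PreJ} (hη : η.InJ S ν) (hx : x.InJ S ν)
    (hfirst : η.sameFirst x) : (η.addBit x).InJ S ν := by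
  refine ⟨PreJ.addBit_reduced hη.1 hx.1 hfirst, ?_, ?_⟩
  · exact hx.2.1
  · refine ((hη.2.2.union hx.2.2).subset ?_)
    intro n hn
    simp only [PreJ.addBit, Set.mem_setOf_eq] at hn
    by_cases h : η.bit n = true
    · exact Set.mem_union_left _ h
    · refine Set.mem_union_right _ ?_
      simp only [Bool.not_eq_true] at h
      simpa [h] using hn

theorem PreJ.addBit_inJfull {η x : PreJ} (hη : η.InJ S ν) (hx : x.InJfull S ν)
    (hfirst : η.sameFirst x) : (η.addBit x).InJfull S ν :=
  ⟨PreJ.addBit_reduced hη.1 hx.1 hfirst, hx.2⟩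

/-- Unary function symbols of the language: the restrictions `π_α` (`α ≤ ω`) and the
symbols `𝛈` for `η ∈ J`. -/
inductive LFun (S : Set Ordinal.{0}) (ν : Ordinal.{0} → ℕ → Ordinal.{0}) : Type 1
  | proj (α : ℕ∞)
  | add (η : PreJ) (h : η.InJ S ν)

/-- Unary relation symbols: `U_{η₀}` for `η₀ ∈ J₀`. -/
def LRel : Type 1 := {x : PreJ // x.IsJ0Elem S ν}

def Funs : ℕ → Type 1
  | 1 => LFun S ν
  | _ => PEmpty

def Rels : ℕ → Type 1
  | 1 => LRel S ν
  | _ => PEmpty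

/-- The language `L = {U_{η₀}, π_α, 𝛈 : η₀ ∈ J₀, η ∈ J, α ≤ ω}`. -/
def L : FirstOrder.Language.{1, 1} := ⟨Funs S ν, Rels S ν⟩

/-- The underlying set `J = J₀ ⊗ J₁` of `𝔄`. -/
def J : Type 1 := {x : PreJ // x.InJ S ν}

/-- The underlying set `𝐉 = J₀ ⊗ 2^{≤ω}` of the auxiliary structure `𝔐`. -/
def Jfull : Type 1 := {x : PreJ // x.InJfull S ν}

open Classical in
instance instJ : (L S ν).Structure (J S ν) where
  funMap {n} := fun f x =>
    match n, f with
    | 1, .proj α => ⟨(x 0).1.restrict α, PreJ.restrict_inJ S ν (x 0).2 α⟩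
    | 1, .add η h =>
      if hc : η.sameFirst (x 0).1 then ⟨η.addBit (x 0).1, PreJ.addBit_inJ S ν h (x 0).2 hc⟩
      else x 0
    | 0, f => f.elim
    | (_ + 2), f => f.elim
  RelMap {n} := fun r x =>
    match n, r with
    | 1, r => r.1.sameFirst (x 0).1
    | 0, r => r.elim
    | (_ + 2), r => r.elim

open Classical in
instance instJfull : (L S ν).Structure (Jfull S ν) where
  funMap {n} := fun f x =>
    match n, f with
    | 1, .proj α => ⟨(x 0).1.restrict α, PreJ.restrict_inJfull S ν (x 0).2 α⟩
    | 1, .add η h =>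
      if hc : η.sameFirst (x 0).1 then ⟨η.addBit (x 0).1, PreJ.addBit_inJfull S ν h (x 0).2 hc⟩
      else x 0
    | 0, f => f.elim
    | (_ + 2), f => f.elim
  RelMap {n} := fun r x =>
    match n, r with
    | 1, r => r.1.sameFirst (x 0).1
    | 0, r => r.elim
    | (_ + 2), r => r.elim

/-- `T = Th(𝔄)`. -/
def T : (L S ν).Theory := (L S ν).completeTheory (J S ν)

/-! ### Generic model-theoretic notions -/

universe u' v' w

section Generic

variable {L' : FirstOrder.Language.{u', v'}}

/-- `φ` isolates the type of the tuple `a` (with respect to `T'`). -/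
def Isol (T' : L'.Theory) {M : Type w} [L'.Structure M] {n : ℕ} (a : Fin n → M)
    (φ : L'.Formula (Fin n)) : Prop :=
  φ.Realize a ∧ ∀ ψ : L'.Formula (Fin n), ψ.Realize a → T' ⊨ᵇ φ.imp ψ

/-- `M` is an atomic model of `T'`: the type of every finite tuple is isolated. -/
def IsAtomicModel (T' : L'.Theory) (M : Type w) [L'.Structure M] : Prop :=
  M ⊨ T' ∧ ∀ (n : ℕ) (a : Fin n → M), ∃ φ : L'.Formula (Fin n), Isol T' a φ

/-- `M` is a prime model of `T'`: it elementarily embeds into every model of `T'`. -/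
def IsPrime (T' : L'.Theory) (M : Type w) [L'.Structure M] : Prop :=
  M ⊨ T' ∧ ∀ (N : Type w) [L'.Structure N], N ⊨ T' → Nonempty (M ↪ₑ[L'] N)

/-- The type of `b` over the parameter set `A` (inside the model `M`) is isolated:  some
formula `φ(ā, x)` with parameters `ā ∈ A` satisfied by `b` decides, over the complete
theory of `M` with constants for `A`, every formula `ψ(ā, c̄, x)` with parameters in `A`. -/
def IsolatedOver (T' : L'.Theory) {M : Type w} [L'.Structure M] (A : Set M) (b : M) : Prop :=
  ∃ (m : ℕ) (a : Fin m → M) (φ : L'.Formula (Fin (m + 1))),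
    (∀ i, a i ∈ A) ∧ φ.Realize (Fin.snoc a b) ∧
      ∀ (k : ℕ) (c : Fin k → M) (ψ : L'.Formula (Fin (m + k + 1))), (∀ i, c i ∈ A) →
        ψ.Realize (Fin.snoc (Fin.append a c) b) →
          ∀ b' : M, φ.Realize (Fin.snoc a b') → ψ.Realize (Fin.snoc (Fin.append a c) b')

/-- `M` is a constructible model of `T'`: it admits an enumeration `(a_α : α < δ)` such
that the type of each `a_α` over its predecessors is isolated. -/
def IsConstructible (T' : L'.Theory) (M : Type w) [L'.Structure M] : Prop :=
  M ⊨ T' ∧ ∃ (δ : Ordinal.{w}) (e : {o : Ordinal.{w} // o < δ} → M), Function.Surjective e ∧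
    ∀ β : {o : Ordinal // o < δ}, IsolatedOver T' (e '' {γ | γ.1 < β.1}) (e β)

end Generic


/-! ### The substructures `𝔄_𝔉 ⊆ 𝔐` -/

variable (f : Ordinal.{0} → ℕ → Bool)

/-- The underlying set `J_𝔉` of `𝔄_𝔉`: all finite sequences, together with the pairs
`(ν_α, η₁)` with `η₁` differing from `f_α` in only finitely many places. -/
def JFset : Set (Jfull S ν) :=
  {x | x.1.len < ⊤ ∨ ∃ α ∈ S, x.1.len = ⊤ ∧ (∀ n, x.1.ord n = ν α n) ∧
    {n : ℕ | x.1.bit n ≠ f α n}.Finite}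

theorem JFset.restrict_mem {x : Jfull S ν} (hx : x ∈ JFset S ν f) (α : ℕ∞) :
    (⟨x.1.restrict α, PreJ.restrict_inJfull S ν x.2 α⟩ : Jfull S ν) ∈ JFset S ν f := by
  rcases hx with hlt | ⟨α', hα'S, hlen, hord, hbit⟩
  · exact Or.inl (lt_of_le_of_lt (min_le_right _ _) hlt)
  · by_cases hα : α = ⊤
    · refine Or.inr ⟨α', hα'S, ?_, ?_, ?_⟩
      · simp [PreJ.restrict, hα, hlen]
      · intro n
        simp only [PreJ.restrict, hα, hlen, min_self]
        rw [if_pos (by exact_mod_cast WithTop.coe_lt_top n)]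
        exact hord n
      · refine hbit.subset ?_
        intro n hn
        simp only [PreJ.restrict, hα, hlen, min_self, Set.mem_setOf_eq] at hn ⊢
        rwa [if_pos (by exact_mod_cast WithTop.coe_lt_top n)] at hn
    · exact Or.inl (lt_of_le_of_lt (min_le_left _ _) (lt_top_iff_ne_top.2 hα))

theorem JFset.addBit_mem {η : PreJ} (hη : η.InJ S ν) {x : Jfull S ν} (hx : x ∈ JFset S ν f)
    (hc : η.sameFirst x.1) :
    (⟨η.addBit x.1, PreJ.addBit_inJfull S ν hη x.2 hc⟩ : Jfull S ν) ∈ JFset S ν f := by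
  rcases hx with hlt | ⟨α', hα'S, hlen, hord, hbit⟩
  · exact Or.inl hlt
  · refine Or.inr ⟨α', hα'S, hlen, hord, ?_⟩
    refine (hη.2.2.union hbit).subset ?_
    intro n hn
    simp only [PreJ.addBit, Set.mem_setOf_eq] at hn
    by_cases hb : η.bit n = true
    · exact Set.mem_union_left _ hb
    · simp only [Bool.not_eq_true] at hb
      refine Set.mem_union_right _ ?_
      simpa [hb] using hn

/-- The substructure `𝔄_𝔉` of `𝔐` with domain `J_𝔉`. -/
def JF : Type 1 := {y : Jfull S ν // y ∈ JFset S ν f}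

open Classical in
instance instJF : (L S ν).Structure (JF S ν f) where
  funMap {n} := fun g x =>
    match n, g with
    | 1, .proj α => ⟨⟨(x 0).1.1.restrict α, PreJ.restrict_inJfull S ν (x 0).1.2 α⟩,
        JFset.restrict_mem S ν f (x 0).2 α⟩
    | 1, .add η h =>
      if hc : η.sameFirst (x 0).1.1 then
        ⟨⟨η.addBit (x 0).1.1, PreJ.addBit_inJfull S ν h (x 0).1.2 hc⟩,
          JFset.addBit_mem S ν f h (x 0).2 hc⟩
      else x 0
    | 0, g => g.elim
    | (_ + 2), g => g.elim
  RelMap {n} := fun r x =>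
    match n, r with
    | 1, r => r.1.sameFirst (x 0).1.1
    | 0, r => r.elim
    | (_ + 2), r => r.elim


/-! ### The twist map -/

section Twist

open Classical in
/-- Twist the binary part of `x` by `g` evaluated along the ordinal part. -/
def twist (g : Ordinal.{0} → Bool) (x : PreJ) : PreJ where
  len := x.len
  ord := x.ord
  bit n := if (n : ℕ∞) < x.len then xor (x.bit n) (g (x.ord n)) else false

theorem twist_len (g : Ordinal.{0} → Bool) (x : PreJ) : (twist g x).len = x.len := rfl

theorem twist_ord (g : Ordinal.{0} → Bool) (x : PreJ) : (twist g x).ord = x.ord := rfl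

theorem twist_reduced (g : Ordinal.{0} → Bool) {x : PreJ} (hx : x.Reduced) :
    (twist g x).Reduced := by
  intro n hn
  refine ⟨(hx n hn).1, ?_⟩
  exact if_neg hn

theorem twist_j0 (g : Ordinal.{0} → Bool) {x : PreJ} (hx : x.J0 S ν) :
    (twist g x).J0 S ν := hx

theorem twist_twist (g : Ordinal.{0} → Bool) {x : PreJ} (hx : x.Reduced) :
    twist g (twist g x) = x := by
  cases x with
  | mk l o b =>
    simp only [twist, PreJ.mk.injEq, true_and]
    funext n
    by_cases h : (n : ℕ∞) < l
    · simp [h, Bool.xor_assoc]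
    · simp only [if_neg h]
      exact ((hx n h).2).symm

theorem twist_sameFirst (g : Ordinal.{0} → Bool) (η x : PreJ) :
    η.sameFirst (twist g x) ↔ η.sameFirst x := Iff.rfl

theorem twist_restrict (g : Ordinal.{0} → Bool) (x : PreJ) (α : ℕ∞) :
    twist g (x.restrict α) = (twist g x).restrict α := by
  simp only [twist, PreJ.restrict, PreJ.mk.injEq, true_and]
  refine ⟨rfl, ?_⟩
  funext n
  by_cases h : (n : ℕ∞) < min α x.len
  · simp [h, lt_of_lt_of_le h (min_le_right α x.len)]
  · simp [h]

theorem twist_addBit (g : Ordinal.{0} → Bool) {η x : PreJ} (hη : η.Reduced)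
    (hc : η.sameFirst x) : twist g (η.addBit x) = η.addBit (twist g x) := by
  simp only [twist, PreJ.addBit, PreJ.mk.injEq, true_and]
  funext n
  by_cases h : (n : ℕ∞) < x.len
  · rw [if_pos h]; exact (if_pos h).trans (Bool.xor_assoc _ _ _)
  · rw [if_neg h]; refine (if_neg h).trans ?_
    have : η.bit n = false := (hη n (by rwa [hc.1])).2
    simp [this]

theorem finite_lt_len {l : ℕ∞} (hl : l < ⊤) : {n : ℕ | (n : ℕ∞) < l}.Finite := by
  lift l to ℕ using hl.ne
  have : {n : ℕ | (n : ℕ∞) < (l : ℕ∞)} ⊆ Set.Iio l := by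
    intro n hn
    simp only [Set.mem_setOf_eq] at hn
    exact_mod_cast hn
  exact (Set.finite_Iio l).subset this

variable {S : Set Ordinal.{0}} {ν : Ordinal.{0} → ℕ → Ordinal.{0}}
  {f : Ordinal.{0} → ℕ → Bool} {g : Ordinal.{0} → Bool}

theorem twist_mem_J (hg : ∀ α ∈ S, {n : ℕ | g (ν α n) ≠ f α n}.Finite)
    (x : JF S ν f) : (twist g x.1.1).InJ S ν := by
  refine ⟨twist_reduced g x.1.2.1, x.1.2.2, ?_⟩
  rcases x.2 with hlt | ⟨α, hαS, hlen, hord, hbit⟩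
  · refine (finite_lt_len hlt).subset fun n hn => ?_
    simp only [twist, Set.mem_setOf_eq] at hn ⊢
    by_contra h
    rw [if_neg h] at hn
    exact absurd hn (by simp)
  · refine ((hbit.union (hg α hαS)).subset fun n hn => ?_)
    simp only [twist, Set.mem_setOf_eq] at hn
    rw [hlen, if_pos (show (n : ℕ∞) < ⊤ by exact_mod_cast WithTop.coe_lt_top n)] at hn
    by_cases h1 : x.1.1.bit n = f α n
    · refine Set.mem_union_right _ ?_
      simp only [Set.mem_setOf_eq, ← hord n]
      intro h2
      rw [h1, h2] at hn
      simp at hn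
    · exact Set.mem_union_left _ h1

theorem twist_mem_JF (hg : ∀ α ∈ S, {n : ℕ | g (ν α n) ≠ f α n}.Finite)
    (x : J S ν) :
    (⟨twist g x.1, twist_reduced g x.2.1, x.2.2.1⟩ : Jfull S ν) ∈ JFset S ν f := by
  by_cases hlen : x.1.len = ⊤
  · obtain ⟨β, hβS, hord⟩ := x.2.2.1.2.2 hlen
    refine Or.inr ⟨β, hβS, hlen, hord, ?_⟩
    refine ((x.2.2.2.union (hg β hβS)).subset fun n hn => ?_)
    simp only [twist, Set.mem_setOf_eq] at hn
    rw [hlen, if_pos (show (n : ℕ∞) < ⊤ by exact_mod_cast WithTop.coe_lt_top n)] at hn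
    by_cases h1 : x.1.bit n = true
    · exact Set.mem_union_left _ h1
    · simp only [Bool.not_eq_true] at h1
      rw [h1, Bool.false_xor, hord n] at hn
      exact Set.mem_union_right _ hn
  · exact Or.inl (lt_top_iff_ne_top.mpr hlen)

end Twist

/-- Assume the ladder system has the uniformization property.  For any
sequence `𝔉 = (f_α : α ∈ S)` of elements of `2^ω`, the substructure `𝔄_𝔉` of `𝔐`, whose
domain consists of all finite-length elements together with the pairs `(ν_α, η₁)` with
`η₁ =* f_α`, is isomorphic to `𝔄`. -/
theorem statement10 {S : Set Ordinal.{0}} {ν : Ordinal.{0} → ℕ → Ordinal.{0}}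
    (hS : IsStationaryBelow S) (hlim : ∀ α ∈ S, Order.IsSuccLimit α)
    (hlad : IsLadderSystem S ν)
    (hunif : Uniformization S ν) (f : Ordinal.{0} → ℕ → Bool) :
    Nonempty (JF S ν f ≃[L S ν] J S ν) := by
  classical
  obtain ⟨g, hg⟩ := hunif f
  let F : JF S ν f → J S ν := fun x => ⟨twist g x.1.1, twist_mem_J hg x⟩
  let G : J S ν → JF S ν f := fun x =>
    ⟨⟨twist g x.1, twist_reduced g x.2.1, x.2.2.1⟩, twist_mem_JF hg x⟩
  refine ⟨⟨⟨F, G, ?_, ?_⟩, ?_, ?_⟩⟩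
  · intro x
    exact Subtype.ext (Subtype.ext (twist_twist g x.1.2.1))
  · intro x
    exact Subtype.ext (twist_twist g x.2.1)
  · intro n fn x
    match n, fn with
    | 1, LFun.proj α => exact Subtype.ext (twist_restrict g (x 0).1.1 α)
    | 1, LFun.add η h =>
      show F (if hc : η.sameFirst (x 0).1.1 then
          ⟨⟨η.addBit (x 0).1.1, PreJ.addBit_inJfull S ν h (x 0).1.2 hc⟩,
            JFset.addBit_mem S ν f h (x 0).2 hc⟩ else x 0)
        = if hc : η.sameFirst ((F ∘ x) 0).1 then
            ⟨η.addBit ((F ∘ x) 0).1, PreJ.addBit_inJ S ν h ((F ∘ x) 0).2 hc⟩ else (F ∘ x) 0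
      by_cases hc : η.sameFirst (x 0).1.1
      · exact (congrArg F (dif_pos hc)).trans ((Subtype.ext (twist_addBit g h.1 hc)).trans
          (dif_pos (show η.sameFirst ((F ∘ x) 0).1 from hc)).symm)
      · exact (congrArg F (dif_neg hc)).trans
          (dif_neg (e := fun _ => (F ∘ x) 0) (show ¬ η.sameFirst ((F ∘ x) 0).1 from hc)).symm
  · intro n r x
    match n, r with
    | 1, r => exact Iff.rfl

end
end LadderPaper
end

section
/- Let 𝔄 be the L-structure on J from the ladder-system example and T = Th(𝔄). Then 𝔄 is not a constructible model of T: there is no enumeration 𝔄 = (η^α : α < ω₁) such that for every β < ω₁ the type tp(η^β / {η^γ : γ < β}) is isolated. -/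
namespace LadderPaper

open FirstOrder FirstOrder.Language Cardinal

noncomputable section

variable (S : Set Ordinal.{0}) (ν : Ordinal.{0} → ℕ → Ordinal.{0})

/-! ### Generic model-theoretic notions -/

universe u' v' w

/-! ### Auxiliary material for Statement 12 -/

section Aux

theorem omega1_isLimit : Order.IsSuccLimit ω₁ :=
  Cardinal.isSuccLimit_ord (Cardinal.aleph0_le_aleph 1)

theorem omega1_pos : (0 : Ordinal) < ω₁ := omega1_isLimit.pos

theorem succ_lt_omega1 {o : Ordinal.{0}} (h : o < ω₁) : o + 1 < ω₁ := by
  rw [Ordinal.add_one_eq_succ]; exact omega1_isLimit.succ_lt h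

theorem iSup_lt_omega1 {f : ℕ → Ordinal.{0}} (h : ∀ n, f n < ω₁) : (⨆ n, f n) < ω₁ := by
  apply Ordinal.iSup_lt_ord_lift _ h
  rw [ω₁, Cardinal.isRegular_aleph_one.cof_eq]
  simpa using Cardinal.aleph0_lt_aleph_one

theorem countable_Iio {o : Ordinal.{0}} (h : o < ω₁) : (Set.Iio o).Countable := by
  rw [Cardinal.countable_iff_lt_aleph_one, Ordinal.mk_Iio_ordinal, Cardinal.lift_lt_aleph_one]
  exact Cardinal.lt_ord.1 h

theorem exists_bound_of_countable {s : Set Ordinal.{0}} (hc : s.Countable)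
    (hs : ∀ o ∈ s, o < ω₁) : ∃ b, b < ω₁ ∧ ∀ o ∈ s, o < b := by
  rcases s.eq_empty_or_nonempty with rfl | hne
  · exact ⟨1, by simpa using succ_lt_omega1 omega1_pos, by simp⟩
  · obtain ⟨f, rfl⟩ := Set.Countable.exists_eq_range hc hne
    refine ⟨(⨆ n, f n) + 1, succ_lt_omega1 (iSup_lt_omega1 fun n => hs _ ⟨n, rfl⟩), ?_⟩
    rintro o ⟨n, rfl⟩
    exact lt_of_le_of_lt (Ordinal.le_iSup f n) (by rw [Ordinal.add_one_eq_succ]; exact Order.lt_succ _)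

/-- The height of an element: the strict sup of its ordinal entries. -/
def ht (x : PreJ) : Ordinal.{0} := ⨆ n, (x.ord n + 1)

theorem lt_add_one_ord (o : Ordinal) : o < o + 1 := by
  rw [Ordinal.add_one_eq_succ]; exact Order.lt_succ _

theorem ord_lt_ht (x : PreJ) (n : ℕ) : x.ord n < ht x :=
  (lt_add_one_ord _).trans_le (Ordinal.le_iSup (fun n => x.ord n + 1) n)

theorem ht_le {x : PreJ} {c : Ordinal} (h : ∀ n, x.ord n + 1 ≤ c) : ht x ≤ c :=
  Ordinal.iSup_le h

theorem ht_lt_omega1 {S : Set Ordinal.{0}} {ν : Ordinal.{0} → ℕ → Ordinal.{0}} {x : PreJ}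
    (hred : x.Reduced) (hx : x.J0 S ν) : ht x < ω₁ := by
  apply iSup_lt_omega1
  intro n
  by_cases h : (n : ℕ∞) < x.len
  · exact succ_lt_omega1 (hx.2.1 n h)
  · rw [(hred n h).1]; simpa using succ_lt_omega1 omega1_pos

theorem ht_lt_of_finite {x : PreJ} (hred : x.Reduced) {N : ℕ} (hlen : x.len = N)
    {δ : Ordinal} (hδ : Order.IsSuccLimit δ) (hvals : ∀ n, x.ord n < δ) : ht x < δ := by
  have hb : ht x ≤ (Finset.range N).sup (fun n => x.ord n + 1) ⊔ 1 := by
    apply ht_le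
    intro n
    by_cases h : n < N
    · exact le_sup_of_le_left (Finset.le_sup (f := fun n => x.ord n + 1) (Finset.mem_range.2 h))
    · have : ¬ ((n : ℕ∞) < x.len) := by
        rw [hlen]; exact_mod_cast h
      rw [(hred n this).1, zero_add]
      exact le_sup_right
  apply lt_of_le_of_lt hb
  apply max_lt
  · rcases Finset.eq_empty_or_nonempty (Finset.range N) with h | h
    · rw [h]; simpa using hδ.pos
    · rw [Finset.sup_lt_iff (by simpa using hδ.pos)]
      intro n _
      rw [Ordinal.add_one_eq_succ]
      exact hδ.succ_lt (hvals n)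
  · exact Ordinal.one_lt_of_isSuccLimit hδ

theorem ht_eq_of_ladder {S : Set Ordinal.{0}} {ν : Ordinal.{0} → ℕ → Ordinal.{0}}
    (hlad : IsLadderSystem S ν) {δ : Ordinal} (hδS : δ ∈ S) (hδ : Order.IsSuccLimit δ)
    {x : PreJ} (hord : ∀ n, x.ord n = ν δ n) : ht x = δ := by
  apply le_antisymm
  · apply ht_le
    intro n
    rw [hord n, Ordinal.add_one_eq_succ]
    exact (hδ.succ_lt ((hlad δ hδS).2.1 n)).le
  · by_contra h
    push_neg at h
    obtain ⟨n, hn⟩ := (hlad δ hδS).2.2 (ht x) h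
    have := ord_lt_ht x n
    rw [hord n] at this
    exact absurd (hn.trans_lt this) (lt_irrefl _)

/-- Extensionality for `PreJ`. -/
theorem PreJ.ext' {x y : PreJ} (h1 : x.len = y.len) (h2 : ∀ n, x.ord n = y.ord n)
    (h3 : ∀ n, x.bit n = y.bit n) : x = y := by
  cases x; cases y
  simp only [PreJ.mk.injEq]
  exact ⟨h1, funext h2, funext h3⟩

/-- The set of finite-length elements of bounded height is countable. -/
theorem countable_finite_part (S : Set Ordinal.{0}) (ν : Ordinal.{0} → ℕ → Ordinal.{0})
    {β : Ordinal.{0}} (hβ : β < ω₁) :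
    {x : J S ν | x.1.len ≠ ⊤ ∧ ht x.1 ≤ β}.Countable := by
  have hcIio : Countable (Set.Iio β) := (countable_Iio hβ).to_subtype
  rw [← Set.countable_coe_iff]
  have key : Function.Injective (fun x : {x : J S ν | x.1.len ≠ ⊤ ∧ ht x.1 ≤ β} =>
      ((x.1.1.len.toNat, List.ofFn fun i : Fin x.1.1.len.toNat =>
        ((⟨x.1.1.ord i, (ord_lt_ht x.1.1 i).trans_le x.2.2⟩ : Set.Iio β), x.1.1.bit i)) :
        ℕ × List ((Set.Iio β) × Bool))) := by
    rintro ⟨⟨x, hx⟩, hx2⟩ ⟨⟨y, hy⟩, hy2⟩ h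
    simp only [Prod.mk.injEq] at h
    obtain ⟨h1, h2⟩ := h
    have hNx : x.len = (x.len.toNat : ℕ∞) := (ENat.coe_toNat hx2.1).symm
    have hNy : y.len = (y.len.toNat : ℕ∞) := (ENat.coe_toNat hy2.1).symm
    have hlen : x.len = y.len := by rw [hNx, hNy, h1]
    have hcomp : ∀ n : ℕ, n < x.len.toNat → x.ord n = y.ord n ∧ x.bit n = y.bit n := by
      intro n hn
      have e1 := congrArg (fun l => l[n]?) h2
      simp only [List.getElem?_ofFn] at e1
      simp only [List.ofFnNthVal, dif_pos hn, dif_pos (h1 ▸ hn)] at e1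
      simp only [Option.some.injEq, Prod.mk.injEq, Subtype.mk.injEq] at e1
      exact ⟨congrArg Subtype.val e1.1, e1.2⟩
    have hord : ∀ n, x.ord n = y.ord n := by
      intro n
      by_cases hn : n < x.len.toNat
      · exact (hcomp n hn).1
      · have hnx : ¬ ((n : ℕ∞) < x.len) := by rw [hNx]; exact_mod_cast hn
        have hny : ¬ ((n : ℕ∞) < y.len) := by rw [← hlen]; exact hnx
        rw [(hx.1 n hnx).1, (hy.1 n hny).1]
    have hbit : ∀ n, x.bit n = y.bit n := by
      intro n
      by_cases hn : n < x.len.toNat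
      · exact (hcomp n hn).2
      · have hnx : ¬ ((n : ℕ∞) < x.len) := by rw [hNx]; exact_mod_cast hn
        have hny : ¬ ((n : ℕ∞) < y.len) := by rw [← hlen]; exact hnx
        rw [(hx.1 n hnx).2, (hy.1 n hny).2]
    exact Subtype.ext (Subtype.ext (PreJ.ext' hlen hord hbit))
  exact key.countable

/-! ### The bit-flipping automorphism -/

section Flip

variable {S : Set Ordinal.{0}} {ν : Ordinal.{0} → ℕ → Ordinal.{0}}

open Classical in
/-- Flip the bit sitting above the ordinal `ξ`. -/
def flipBit (ξ : Ordinal.{0}) (x : PreJ) : PreJ where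
  len := x.len
  ord := x.ord
  bit n := if x.ord n = ξ then !x.bit n else x.bit n

theorem flipBit_reduced {ξ : Ordinal} (hξ : ξ ≠ 0) {x : PreJ} (h : x.Reduced) :
    (flipBit ξ x).Reduced := by
  intro n hn
  refine ⟨(h n hn).1, ?_⟩
  show (if x.ord n = ξ then !x.bit n else x.bit n) = false
  rw [if_neg (by rw [(h n hn).1]; exact fun e => hξ e.symm), (h n hn).2]

theorem flipBit_flipBit (ξ : Ordinal) (x : PreJ) : flipBit ξ (flipBit ξ x) = x := by
  refine PreJ.ext' rfl (fun n => rfl) (fun n => ?_)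
  by_cases h : x.ord n = ξ <;> simp [flipBit, h]

theorem ord_eq_subsingleton {x : PreJ} (hred : x.Reduced) (hx : x.J0 S ν) {ξ : Ordinal}
    (hξ : ξ ≠ 0) : {n : ℕ | x.ord n = ξ}.Subsingleton := by
  have key : ∀ m n : ℕ, m < n → x.ord m = ξ → x.ord n = ξ → False := by
    intro m n hmn hm hn
    by_cases hl : (n : ℕ∞) < x.len
    · have := hx.1 m n hmn hl
      rw [hm, hn] at this
      exact lt_irrefl _ this
    · rw [(hred n hl).1] at hn
      exact hξ hn.symm
  intro m hm n hn
  by_contra hne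
  rcases lt_or_gt_of_ne hne with h | h
  · exact key m n h hm hn
  · exact key n m h hn hm

theorem flipBit_inJ {ξ : Ordinal} (hξ : ξ ≠ 0) {x : PreJ} (hx : x.InJ S ν) :
    (flipBit ξ x).InJ S ν := by
  refine ⟨flipBit_reduced hξ hx.1, hx.2.1, ?_⟩
  refine ((hx.2.2.union (Set.Subsingleton.finite
    (ord_eq_subsingleton hx.1 hx.2.1 hξ))).subset ?_)
  intro n hn
  by_cases h : x.ord n = ξ
  · exact Set.mem_union_right _ h
  · left
    have : (if x.ord n = ξ then !x.bit n else x.bit n) = true := hn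
    rwa [if_neg h] at this

theorem flipBit_restrict {ξ : Ordinal} (hξ : ξ ≠ 0) (x : PreJ) (α : ℕ∞) :
    flipBit ξ (x.restrict α) = (flipBit ξ x).restrict α := by
  refine PreJ.ext' rfl (fun n => rfl) (fun n => ?_)
  show (if (x.restrict α).ord n = ξ then !(x.restrict α).bit n else (x.restrict α).bit n)
      = (if (n : ℕ∞) < min α x.len then (flipBit ξ x).bit n else false)
  by_cases h : (n : ℕ∞) < min α x.len
  · simp only [PreJ.restrict, if_pos h]; rfl
  · simp only [PreJ.restrict, if_neg h]
    rw [if_neg (fun e => hξ e.symm)]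

theorem flipBit_addBit (ξ : Ordinal) (η x : PreJ) :
    flipBit ξ (η.addBit x) = η.addBit (flipBit ξ x) := by
  refine PreJ.ext' rfl (fun n => rfl) (fun n => ?_)
  show (if x.ord n = ξ then !(xor (η.bit n) (x.bit n)) else xor (η.bit n) (x.bit n))
      = xor (η.bit n) (if x.ord n = ξ then !x.bit n else x.bit n)
  by_cases h : x.ord n = ξ
  · rw [if_pos h, if_pos h]
    cases η.bit n <;> cases x.bit n <;> rfl
  · rw [if_neg h, if_neg h]

/-- The bit flip as a plain bijection of `J`. -/
def flipEquivJ (ξ : Ordinal) (hξ : ξ ≠ 0) : J S ν ≃ J S ν where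
  toFun x := ⟨flipBit ξ x.1, flipBit_inJ hξ x.2⟩
  invFun x := ⟨flipBit ξ x.1, flipBit_inJ hξ x.2⟩
  left_inv x := Subtype.ext (flipBit_flipBit ξ x.1)
  right_inv x := Subtype.ext (flipBit_flipBit ξ x.1)

open Classical in
/-- The interpretation of the symbol `𝛈`. -/
def addMap (η : PreJ) (h : η.InJ S ν) (x : J S ν) : J S ν :=
  if hc : η.sameFirst x.1 then ⟨η.addBit x.1, PreJ.addBit_inJ S ν h x.2 hc⟩ else x

theorem funMap_add (η : PreJ) (h : η.InJ S ν) (xs : Fin 1 → J S ν) :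
    Structure.funMap (M := J S ν) (show (L S ν).Functions 1 from LFun.add η h) xs
      = addMap η h (xs 0) := rfl

theorem funMap_proj (α : ℕ∞) (xs : Fin 1 → J S ν) :
    Structure.funMap (M := J S ν) (show (L S ν).Functions 1 from LFun.proj α) xs
      = ⟨(xs 0).1.restrict α, PreJ.restrict_inJ S ν (xs 0).2 α⟩ := rfl

theorem flip_addMap (ξ : Ordinal) (hξ : ξ ≠ 0) (η : PreJ) (h : η.InJ S ν) (x : J S ν) :
    flipEquivJ ξ hξ (addMap η h x) = addMap η h (flipEquivJ ξ hξ x) := by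
  unfold addMap
  by_cases hc : η.sameFirst x.1
  · show flipEquivJ ξ hξ (addMap η h x) = addMap η h (flipEquivJ ξ hξ x)
    have e1 : addMap η h x = ⟨η.addBit x.1, PreJ.addBit_inJ S ν h x.2 hc⟩ := dif_pos hc
    have e2 : addMap η h (flipEquivJ ξ hξ x) = ⟨η.addBit (flipEquivJ ξ hξ x).1,
        PreJ.addBit_inJ S ν h (flipEquivJ ξ hξ x).2 hc⟩ := dif_pos hc
    rw [e1, e2]
    exact Subtype.ext (flipBit_addBit ξ η x.1)
  · show flipEquivJ ξ hξ (addMap η h x) = addMap η h (flipEquivJ ξ hξ x)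
    have e1 : addMap η h x = x := dif_neg hc
    have e2 : addMap η h (flipEquivJ ξ hξ x) = flipEquivJ ξ hξ x := dif_neg hc
    rw [e1, e2]

/-- The bit flip as an automorphism of the structure `𝔄`. -/
def flipLEquiv (ξ : Ordinal) (hξ : ξ ≠ 0) : (J S ν) ≃[L S ν] (J S ν) where
  toEquiv := flipEquivJ ξ hξ
  map_fun' := by
    intro n f xs
    match n, f with
    | 1, LFun.proj α =>
      exact Subtype.ext (flipBit_restrict hξ (xs 0).1 α)
    | 1, LFun.add η h =>
      exact flip_addMap ξ hξ η h (xs 0)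
    | 0, f => exact f.elim
    | (k+2), f => exact f.elim
  map_rel' := by
    intro n r xs
    match n, r with
    | 1, r => exact Iff.rfl
    | 0, r => exact r.elim
    | (k+2), r => exact r.elim

end Flip

/-! ### Bounding the ordinals occurring in a parameter -/

theorem param_bound {S : Set Ordinal.{0}} {ν : Ordinal.{0} → ℕ → Ordinal.{0}}
    (hlim : ∀ α ∈ S, Order.IsSuccLimit α) (hlad : IsLadderSystem S ν) {δ : Ordinal}
    (hδS : δ ∈ S) {y : PreJ} (hy : y.InJ S ν) (hne : ¬(y.len = ⊤ ∧ y.ord = ν δ)) :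
    ∃ ρ, ρ < δ ∧ ∀ n, y.ord n < δ → y.ord n ≤ ρ := by
  have hδlim := hlim δ hδS
  by_cases hl : y.len = ⊤
  · obtain ⟨γ, hγS, hord⟩ := hy.2.1.2.2 hl
    have hγδ : γ ≠ δ := by
      rintro rfl
      exact hne ⟨hl, funext hord⟩
    rcases lt_or_gt_of_ne hγδ with h | h
    · exact ⟨γ, h, fun n _ => by rw [hord n]; exact ((hlad γ hγS).2.1 n).le⟩
    · obtain ⟨m, hm⟩ := (hlad γ hγS).2.2 δ h
      refine ⟨(Finset.range m).sup (fun n => if ν γ n < δ then ν γ n else 0), ?_, ?_⟩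
      · rw [Finset.sup_lt_iff (show ⊥ < δ from hδlim.pos)]
        intro n _
        split_ifs with h'
        · exact h'
        · exact hδlim.pos
      · intro n hn
        rw [hord n] at hn ⊢
        have hnm : n < m := by
          by_contra h'
          push_neg at h'
          exact absurd (hm.trans ((hlad γ hγS).1.monotone h')) (not_le.2 hn)
        calc ν γ n = if ν γ n < δ then ν γ n else 0 := (if_pos hn).symm
          _ ≤ _ := Finset.le_sup (f := fun n => if ν γ n < δ then ν γ n else 0)
              (Finset.mem_range.2 hnm)
  · have hN : y.len = (y.len.toNat : ℕ∞) := (ENat.coe_toNat hl).symm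
    refine ⟨(Finset.range y.len.toNat).sup (fun n => if y.ord n < δ then y.ord n else 0), ?_, ?_⟩
    · rw [Finset.sup_lt_iff (show ⊥ < δ from hδlim.pos)]
      intro n _
      split_ifs with h'
      · exact h'
      · exact hδlim.pos
    · intro n hn
      by_cases hnN : n < y.len.toNat
      · calc y.ord n = if y.ord n < δ then y.ord n else 0 := (if_pos hn).symm
          _ ≤ _ := Finset.le_sup (f := fun n => if y.ord n < δ then y.ord n else 0)
              (Finset.mem_range.2 hnN)
      · rw [(hy.1 n (by rw [hN]; exact_mod_cast hnN)).1]
        exact zero_le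

end Aux

/-- `𝔄` is not a constructible model of `T = Th(𝔄)`: there is no
enumeration `(η^α : α < ω₁)` of `𝔄` in which the type of each element over its
predecessors is isolated. -/
theorem statement12 {S : Set Ordinal.{0}} {ν : Ordinal.{0} → ℕ → Ordinal.{0}}
    (hS : IsStationaryBelow S) (hlim : ∀ α ∈ S, Order.IsSuccLimit α)
    (hlad : IsLadderSystem S ν) :
    ¬ ∃ e : {o : Ordinal.{0} // o < ω₁} → J S ν, Function.Surjective e ∧
      ∀ β : {o : Ordinal.{0} // o < ω₁},
        IsolatedOver (T S ν) (e '' {γ | γ.1 < β.1}) (e β) := by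
  rintro ⟨e, hsurj, hiso⟩
  classical
  -- The club of stages closed under the enumeration.
  set C : Set Ordinal.{0} := {δ | δ < ω₁ ∧
      (∀ γ : {o : Ordinal.{0} // o < ω₁}, γ.1 < δ → ht (e γ).1 < δ) ∧
      (∀ x : J S ν, x.1.len ≠ ⊤ → ht x.1 < δ →
        ∃ γ : {o : Ordinal.{0} // o < ω₁}, γ.1 < δ ∧ e γ = x)} with hCdef
  have hck : IsClubBelow C := by
    refine ⟨fun δ hδ => hδ.1, ?_, ?_⟩
    · -- unboundedness
      have hF : ∀ β : {o : Ordinal.{0} // o < ω₁}, ∃ bb : {o : Ordinal.{0} // o < ω₁},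
          β.1 < bb.1 ∧ (∀ γ : {o : Ordinal.{0} // o < ω₁}, γ.1 ≤ β.1 → ht (e γ).1 < bb.1) ∧
          (∀ x : J S ν, x.1.len ≠ ⊤ → ht x.1 ≤ β.1 →
            ∃ γ : {o : Ordinal.{0} // o < ω₁}, γ.1 < bb.1 ∧ e γ = x) := by
        intro β
        obtain ⟨b₁, hb₁, hb₁'⟩ := exists_bound_of_countable
          (s := (fun o => if h : o < ω₁ then ht (e ⟨o, h⟩).1 else 0) '' Set.Iio (β.1 + 1))
          ((countable_Iio (succ_lt_omega1 β.2)).image _)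
          (by
            rintro o ⟨o', _, rfl⟩
            show (if h : o' < ω₁ then ht (e ⟨o', h⟩).1 else 0) < ω₁
            split
            · exact ht_lt_omega1 (e _).2.1 (e _).2.2.1
            · exact omega1_pos)
        obtain ⟨b₂, hb₂, hb₂'⟩ := exists_bound_of_countable
          (s := (fun x : J S ν => (Classical.choose (hsurj x)).1) ''
            {x : J S ν | x.1.len ≠ ⊤ ∧ ht x.1 ≤ β.1})
          ((countable_finite_part S ν β.2).image _)
          (by rintro o ⟨x, _, rfl⟩; exact (Classical.choose (hsurj x)).2)
        refine ⟨⟨max (β.1 + 1) (max b₁ b₂),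
          max_lt (succ_lt_omega1 β.2) (max_lt hb₁ hb₂)⟩, ?_, ?_, ?_⟩
        · exact lt_of_lt_of_le (lt_add_one_ord _) (le_max_left _ _)
        · intro γ hγ
          have hmem : ht (e γ).1 ∈ (fun o => if h : o < ω₁ then ht (e ⟨o, h⟩).1 else 0) ''
              Set.Iio (β.1 + 1) := by
            refine ⟨γ.1, lt_of_le_of_lt hγ (lt_add_one_ord _), ?_⟩
            simp only [dif_pos γ.2]
          exact (hb₁' _ hmem).trans_le ((le_max_left b₁ b₂).trans (le_max_right _ _))
        · intro x hx hhx
          refine ⟨Classical.choose (hsurj x), ?_, Classical.choose_spec (hsurj x)⟩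
          have := hb₂' _ ⟨x, ⟨hx, hhx⟩, rfl⟩
          exact this.trans_le ((le_max_right b₁ b₂).trans (le_max_right _ _))
      choose F hF1 hF2 hF3 using hF
      intro α hα
      set g : ℕ → {o : Ordinal.{0} // o < ω₁} :=
        fun n => Nat.rec ⟨α, hα⟩ (fun _ ih => F ih) n with hg
      have hδsup : (⨆ n, (g n).1) < ω₁ := iSup_lt_omega1 (fun n => (g n).2)
      refine ⟨⨆ n, (g n).1, ⟨hδsup, ?_, ?_⟩, Ordinal.le_iSup (fun n => (g n).1) 0⟩
      · intro γ hγ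
        rw [Ordinal.lt_iSup_iff] at hγ
        obtain ⟨n, hn⟩ := hγ
        exact (hF2 (g n) γ hn.le).trans_le (Ordinal.le_iSup (fun n => (g n).1) (n + 1))
      · intro x hx hhx
        rw [Ordinal.lt_iSup_iff] at hhx
        obtain ⟨n, hn⟩ := hhx
        obtain ⟨γ, hγ, hγe⟩ := hF3 (g n) x hx hn.le
        exact ⟨γ, hγ.trans_le (Ordinal.le_iSup (fun n => (g n).1) (n + 1)), hγe⟩
    · -- closedness
      intro α hα hαlim hcof
      refine ⟨hα, ?_, ?_⟩
      · intro γ hγ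
        obtain ⟨c, hcC, hc1, hc2⟩ := hcof (γ.1 + 1)
          (by rw [Ordinal.add_one_eq_succ]; exact hαlim.succ_lt hγ)
        exact (hcC.2.1 γ (lt_of_lt_of_le (lt_add_one_ord _) hc1)).trans hc2
      · intro x hx hhx
        obtain ⟨c, hcC, hc1, hc2⟩ := hcof (ht x.1 + 1)
          (by rw [Ordinal.add_one_eq_succ]; exact hαlim.succ_lt hhx)
        obtain ⟨γ, hγ, hγe⟩ := hcC.2.2 x hx (lt_of_lt_of_le (lt_add_one_ord _) hc1)
        exact ⟨γ, hγ.trans hc2, hγe⟩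
  obtain ⟨δ, hδS, hδC⟩ := hS.2 C hck
  have hδlim := hlim δ hδS
  have hδω : δ < ω₁ := hS.1 hδS
  -- the element `(ν_δ, 0)` of `J`
  have hx₀J : (PreJ.mk ⊤ (ν δ) (fun _ => false)).InJ S ν := by
    refine ⟨fun n hn => absurd (WithTop.coe_lt_top n) hn,
      ⟨fun m n hmn _ => (hlad δ hδS).1 hmn,
       fun n _ => ((hlad δ hδS).2.1 n).trans hδω,
       fun _ => ⟨δ, hδS, fun n => rfl⟩⟩, by simp⟩
  -- the first stage at which an element with first coordinate `ν_δ` appears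
  set O : Set Ordinal.{0} :=
    {o | ∃ h : o < ω₁, (e ⟨o, h⟩).1.len = ⊤ ∧ (e ⟨o, h⟩).1.ord = ν δ} with hOdef
  have hOne : O.Nonempty := by
    obtain ⟨γ, hγ⟩ := hsurj ⟨_, hx₀J⟩
    exact ⟨γ.1, γ.2, by
      rw [show (⟨γ.1, γ.2⟩ : {o : Ordinal.{0} // o < ω₁}) = γ from rfl, hγ]
      exact ⟨rfl, rfl⟩⟩
  obtain ⟨hβω, hblen, hbord⟩ := csInf_mem hOne
  set β : {o : Ordinal.{0} // o < ω₁} := ⟨sInf O, hβω⟩ with hβdef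
  set b : J S ν := e β with hbdef
  have hblen' : b.1.len = ⊤ := hblen
  have hbord' : b.1.ord = ν δ := hbord
  have hhtb : ht b.1 = δ :=
    ht_eq_of_ladder hlad hδS hδlim (fun n => congrFun hbord' n)
  have hδβ : δ ≤ β.1 := by
    by_contra h
    push_neg at h
    have := hδC.2.1 β h
    rw [hhtb] at this
    exact lt_irrefl _ this
  -- the isolating formula
  obtain ⟨m, a, φ, ha, hφ, hmax⟩ := hiso β
  -- parameters do not have first coordinate `ν_δ`
  have hpar : ∀ i, ¬((a i).1.len = ⊤ ∧ (a i).1.ord = ν δ) := by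
    intro i hcon
    obtain ⟨γ, hγ, hγe⟩ := ha i
    have hle : sInf O ≤ γ.1 := csInf_le (OrderBot.bddBelow O)
      ⟨γ.2, by rw [show (⟨γ.1, γ.2⟩ : {o : Ordinal.{0} // o < ω₁}) = γ from rfl, hγe]; exact hcon⟩
    exact absurd hγ (not_lt.2 hle)
  have hbnd := fun i => param_bound hlim hlad hδS (a i).2 (hpar i)
  choose ρf hρ1 hρ2 using hbnd
  set ρ : Ordinal := Finset.univ.sup ρf with hρdef
  have hρδ : ρ < δ := by
    rw [hρdef, Finset.sup_lt_iff (show ⊥ < δ from hδlim.pos)]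
    exact fun i _ => hρ1 i
  obtain ⟨n₀, hn₀⟩ := (hlad δ hδS).2.2 (ρ + 1)
    (by rw [Ordinal.add_one_eq_succ]; exact hδlim.succ_lt hρδ)
  set ξ := ν δ n₀ with hξdef
  have hρξ : ρ < ξ := lt_of_lt_of_le (lt_add_one_ord ρ) hn₀
  have hξδ : ξ < δ := (hlad δ hδS).2.1 n₀
  have hξ0 : ξ ≠ 0 := pos_iff_ne_zero.1 (lt_of_le_of_lt (show (0 : Ordinal) ≤ ρ from zero_le) hρξ)
  set σ := flipLEquiv (S := S) (ν := ν) ξ hξ0 with hσdef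
  -- σ fixes the parameters
  have hfix : ∀ i, σ (a i) = a i := by
    intro i
    apply Subtype.ext
    refine PreJ.ext' rfl (fun n => rfl) (fun n => ?_)
    show (if (a i).1.ord n = ξ then !(a i).1.bit n else (a i).1.bit n) = (a i).1.bit n
    rw [if_neg]
    intro hcon
    by_cases hlt : (a i).1.ord n < δ
    · exact absurd (hcon ▸ ((hρ2 i n hlt).trans (Finset.le_sup (f := ρf) (Finset.mem_univ i))))
        (not_le.2 hρξ)
    · exact hlt (hcon ▸ hξδ)
  -- applying σ to the isolating formula
  have hφ' : φ.Realize (Fin.snoc a (σ b)) := by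
    have hcomp : (⇑σ) ∘ (Fin.snoc a b) = Fin.snoc a (σ b) := by
      funext i
      refine Fin.lastCases ?_ (fun j => ?_) i
      · simp [Fin.snoc_last]
      · simp [Fin.snoc_castSucc, hfix j]
    have := (StrongHomClass.realize_formula σ (φ := φ) (v := Fin.snoc a b)).2 hφ
    rwa [hcomp] at this
  -- the distinguishing restriction
  set cJ : J S ν := ⟨b.1.restrict ((n₀ + 1 : ℕ) : ℕ∞), PreJ.restrict_inJ S ν b.2 _⟩ with hcJdef
  have hcJlen : cJ.1.len = ((n₀ + 1 : ℕ) : ℕ∞) := by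
    show min ((n₀ + 1 : ℕ) : ℕ∞) b.1.len = _
    rw [hblen']
    exact min_eq_left le_top
  have hcJht : ht cJ.1 < δ := by
    refine ht_lt_of_finite (PreJ.restrict_reduced b.1 _) hcJlen hδlim (fun n => ?_)
    show (if (n : ℕ∞) < min ((n₀ + 1 : ℕ) : ℕ∞) b.1.len then b.1.ord n else 0) < δ
    split_ifs with h
    · rw [hbord']; exact (hlad δ hδS).2.1 n
    · exact hδlim.pos
  obtain ⟨γc, hγc, hγce⟩ := hδC.2.2 cJ (by rw [hcJlen]; exact WithTop.coe_ne_top) hcJht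
  have hcJA : cJ ∈ e '' {γ : {o : Ordinal.{0} // o < ω₁} | γ.1 < β.1} :=
    ⟨γc, lt_of_lt_of_le hγc hδβ, hγce⟩
  -- the distinguishing formula  ψ : π_{n₀+1}(x) = cJ
  set t₁ : (L S ν).Term (Fin (m + 1 + 1)) :=
    Term.func (show (L S ν).Functions 1 from LFun.proj ((n₀ + 1 : ℕ) : ℕ∞))
      ![Term.var (Fin.last (m + 1))] with ht₁def
  set t₂ : (L S ν).Term (Fin (m + 1 + 1)) :=
    Term.var (Fin.castSucc (Fin.natAdd m (0 : Fin 1))) with ht₂def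
  set ψ : (L S ν).Formula (Fin (m + 1 + 1)) := Term.equal t₁ t₂ with hψdef
  have hψreal : ∀ y : J S ν,
      ψ.Realize (Fin.snoc (Fin.append a (fun _ : Fin 1 => cJ)) y) ↔
        (⟨y.1.restrict ((n₀ + 1 : ℕ) : ℕ∞), PreJ.restrict_inJ S ν y.2 _⟩ : J S ν) = cJ := by
    intro y
    rw [hψdef, Formula.realize_equal, ht₁def, ht₂def]
    simp only [Term.realize, Fin.snoc_last, Fin.snoc_castSucc, Fin.append_right]
    rw [show (fun i => Term.realize (Fin.snoc (Fin.append a fun _ : Fin 1 => cJ) y)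
        (![Term.var (Fin.last (m + 1))] i)) = ![y] from ?_]
    · rw [funMap_proj]
      rfl
    · funext i
      fin_cases i
      simp [Term.realize, Fin.snoc_last]
  have hψb : ψ.Realize (Fin.snoc (Fin.append a (fun _ : Fin 1 => cJ)) b) :=
    (hψreal b).2 rfl
  have hψb' := hmax 1 (fun _ => cJ) ψ (fun _ => hcJA) hψb (σ b) hφ'
  have hres := (hψreal (σ b)).1 hψb'
  have hval : (σ b).1.restrict ((n₀ + 1 : ℕ) : ℕ∞) = cJ.1 := congrArg Subtype.val hres
  have hbit : ((σ b).1.restrict ((n₀ + 1 : ℕ) : ℕ∞)).bit n₀ = cJ.1.bit n₀ := by rw [hval]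
  have hcond : ((n₀ : ℕ∞)) < min ((n₀ + 1 : ℕ) : ℕ∞) b.1.len := by
    rw [hblen', min_eq_left le_top]
    exact_mod_cast Nat.lt_succ_self n₀
  have hLHS : ((σ b).1.restrict ((n₀ + 1 : ℕ) : ℕ∞)).bit n₀ = !(b.1.bit n₀) := by
    show (if (n₀ : ℕ∞) < min ((n₀ + 1 : ℕ) : ℕ∞) (σ b).1.len then (σ b).1.bit n₀ else false) = _
    rw [show (σ b).1.len = b.1.len from rfl, if_pos hcond]
    show (if b.1.ord n₀ = ξ then !b.1.bit n₀ else b.1.bit n₀) = _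
    rw [if_pos (show b.1.ord n₀ = ξ from by rw [hbord'])]
  have hRHS : cJ.1.bit n₀ = b.1.bit n₀ := by
    show (if (n₀ : ℕ∞) < min ((n₀ + 1 : ℕ) : ℕ∞) b.1.len then b.1.bit n₀ else false) = _
    rw [if_pos hcond]
  rw [hLHS, hRHS] at hbit
  cases hb : b.1.bit n₀ <;> rw [hb] at hbit <;> exact Bool.noConfusion hbit

end
end LadderPaper
end

section
/- Let T be a complete theory in a language of size ℵ₁ with atomic models. If α ∈ Spec_{K_T}(AP), A is an α-base, B ⊇ A is an atomic set, and p(x̄) ∈ S_at(A), then p(x̄) extends to a type in S_at(B). -/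
namespace AbsPaper

open FirstOrder FirstOrder.Language Cardinal Set

universe u v

noncomputable section

/-! ### Set-theoretic preliminaries -/

/-- The first uncountable ordinal. -/
def ω₁ : Ordinal.{0} := (Cardinal.aleph 1).ord

/-- `C` is a club (closed unbounded) subset of `ω₁`. -/
def IsClubBelow (C : Set Ordinal.{0}) : Prop :=
  C ⊆ Set.Iio ω₁ ∧ (∀ α < ω₁, ∃ β ∈ C, α ≤ β) ∧
    ∀ α < ω₁, Order.IsSuccLimit α → (∀ β < α, ∃ γ ∈ C, β ≤ γ ∧ γ < α) → α ∈ C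

/-- `S` is a stationary subset of `ω₁`. -/
def IsStationaryBelow (S : Set Ordinal.{0}) : Prop :=
  S ⊆ Set.Iio ω₁ ∧ ∀ C, IsClubBelow C → (S ∩ C).Nonempty

/-- The weak diamond `Φ(S)`: for every `F : 2^{<ω₁} → 2` there is `g : ω₁ → 2` such that
for every `f : ω₁ → 2` the set `{α ∈ S : F(f↾α) = g(α)}` is stationary. -/
def WeakDiamond (S : Set Ordinal.{0}) : Prop :=
  ∀ F : (α : Ordinal.{0}) → ((Set.Iio α) → Bool) → Bool,
    ∃ g : Ordinal.{0} → Bool, ∀ f : Ordinal.{0} → Bool,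
      IsStationaryBelow {α | α ∈ S ∧ F α (fun β => f β.1) = g α}

/-- `Φ*`: the weak diamond holds on every stationary subset of `ω₁`. -/
def WeakDiamondStar : Prop :=
  ∀ S : Set Ordinal.{0}, IsStationaryBelow S → WeakDiamond S

/-- `cov(meager)`: the least number of closed nowhere dense sets needed to cover Cantor
space `2^ω`. -/
def covMeager : Cardinal.{0} :=
  sInf {κ : Cardinal.{0} | ∃ (ι : Type) (C : ι → Set (ℕ → Bool)),
    #ι = κ ∧ (∀ i, IsClosed (C i) ∧ IsNowhereDense (C i)) ∧ (⋃ i, C i) = Set.univ}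

/-! ### Sublanguages and filtrations -/

variable {L : FirstOrder.Language.{u, v}}

/-- A sublanguage of `L`, given by sets of function and relation symbols. -/
structure Sublanguage (L : FirstOrder.Language.{u, v}) where
  funs : ∀ n, Set (L.Functions n)
  rels : ∀ n, Set (L.Relations n)

/-- The sublanguage as a language in its own right. -/
def Sublanguage.lang (Sl : Sublanguage L) : FirstOrder.Language.{u, v} :=
  ⟨fun n => ↥(Sl.funs n), fun n => ↥(Sl.rels n)⟩

/-- The inclusion of a sublanguage into `L`. -/
def Sublanguage.hom (Sl : Sublanguage L) : Sl.lang →ᴸ L :=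
  ⟨fun _ f => f.1, fun _ r => r.1⟩

/-- `Sl` is countable. -/
def Sublanguage.Countable' (Sl : Sublanguage L) : Prop :=
  (∀ n, (Sl.funs n).Countable) ∧ ∀ n, (Sl.rels n).Countable

/-- `Sl ≤ Sl'` as sublanguages. -/
def Sublanguage.le (Sl Sl' : Sublanguage L) : Prop :=
  (∀ n, Sl.funs n ⊆ Sl'.funs n) ∧ ∀ n, Sl.rels n ⊆ Sl'.rels n

/-- `φ` is a formula of the sublanguage `Sl` (a bounded formula all of whose symbols lie
in `Sl`). -/
def Sublanguage.IsBForm (Sl : Sublanguage L) {β : Type*} {k : ℕ}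
    (φ : L.BoundedFormula β k) : Prop :=
  ∃ ψ : Sl.lang.BoundedFormula β k, Sl.hom.onBoundedFormula ψ = φ

/-- A decomposition `L = ⋃_{α<ω₁} L_α` of `L` as a continuous increasing union of
countable sublanguages. -/
structure Filtration (L : FirstOrder.Language.{u, v}) where
  sub : Ordinal.{0} → Sublanguage L
  mono : ∀ {α β : Ordinal.{0}}, α ≤ β → (sub α).le (sub β)
  continuous : ∀ α : Ordinal.{0}, Order.IsSuccLimit α →
    (∀ n, (sub α).funs n = ⋃ β < α, (sub β).funs n) ∧
      ∀ n, (sub α).rels n = ⋃ β < α, (sub β).rels n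
  countable : ∀ α < ω₁, (sub α).Countable'
  covers : (∀ n (f : L.Functions n), ∃ α < ω₁, f ∈ (sub α).funs n) ∧
    ∀ n (r : L.Relations n), ∃ α < ω₁, r ∈ (sub α).rels n

/-! ### Complete formulas and suitable clubs -/

variable (T : L.Theory)

/-- `φ` is a `T`-complete formula: consistent with `T`, and `T + φ` decides every
formula. -/
def TComplete {β : Type*} (φ : L.Formula β) : Prop :=
  ¬(T ⊨ᵇ φ.not) ∧ ∀ ψ : L.Formula β, (T ⊨ᵇ φ.imp ψ) ∨ (T ⊨ᵇ φ.imp ψ.not)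

/-- `C₀` is a suitable club for `T` and the filtration `F`:  for `α ∈ C₀`, every
`L_α`-formula consistent with `T` extends to a `T`-complete `L_α`-formula. -/
def SuitableClub (F : Filtration L) (C₀ : Set Ordinal.{0}) : Prop :=
  IsClubBelow C₀ ∧ ∀ α ∈ C₀, ∀ (n : ℕ) (φ : L.Formula (Fin n)), (F.sub α).IsBForm φ →
    ¬(T ⊨ᵇ φ.not) →
      ∃ ψ : L.Formula (Fin n), (F.sub α).IsBForm ψ ∧ TComplete T ψ ∧ (T ⊨ᵇ ψ.imp φ)

/-! ### Atomic sets and bases -/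

variable {M : Type w} [L.Structure M]

/-- `φ` isolates the type of the tuple `a` (with respect to `T`). -/
def IsolTp {n : ℕ} (a : Fin n → M) (φ : L.Formula (Fin n)) : Prop :=
  φ.Realize a ∧ ∀ ψ : L.Formula (Fin n), ψ.Realize a → T ⊨ᵇ φ.imp ψ

/-- An atomic set: a countable set all of whose finite tuples have isolated types. -/
def IsAtomicSet (A : Set M) : Prop :=
  A.Countable ∧ ∀ (n : ℕ) (a : Fin n → M), (∀ i, a i ∈ A) →
    ∃ φ : L.Formula (Fin n), IsolTp T a φ

/-- An `Sl`-atomic set: the isolating formulas can be chosen in the sublanguage `Sl`. -/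
def IsAtomicSetIn (Sl : Sublanguage L) (A : Set M) : Prop :=
  A.Countable ∧ ∀ (n : ℕ) (a : Fin n → M), (∀ i, a i ∈ A) →
    ∃ φ : L.Formula (Fin n), Sl.IsBForm φ ∧ IsolTp T a φ

/-- `A` is closed under the `Sl`-functions of `M`. -/
def IsClosedIn (Sl : Sublanguage L) (A : Set M) : Prop :=
  ∀ (n : ℕ) (f : L.Functions n), f ∈ Sl.funs n → ∀ a : Fin n → M, (∀ i, a i ∈ A) →
    Structure.funMap f a ∈ A

/-- The `Sl`-reduct of `A` is an elementary submodel of the `Sl`-reduct of `M`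
(Tarski–Vaught). -/
def IsElemIn (Sl : Sublanguage L) (A : Set M) : Prop :=
  IsClosedIn Sl A ∧
    ∀ (n : ℕ) (φ : L.BoundedFormula (Fin n) 1), Sl.IsBForm φ →
      ∀ a : Fin n → M, (∀ i, a i ∈ A) → (∃ b : M, φ.Realize a fun _ => b) →
        ∃ b ∈ A, φ.Realize a fun _ => b

/-- An `α`-base: an `α`-atomic set whose `L_α`-reduct is elementary in `M`. -/
def IsBaseAt (F : Filtration L) (α : Ordinal.{0}) (A : Set M) : Prop :=
  IsAtomicSetIn T (F.sub α) A ∧ IsElemIn (F.sub α) A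

/-! ### Types over a set -/

/-- The assignment interpreting parameters from `A` by themselves. -/
def paramAssign (A : Set M) {n : ℕ} (b : Fin n → M) : ↥A ⊕ Fin n → M :=
  Sum.elim Subtype.val b

/-- The type of the tuple `b` over `A`. -/
def tpOver (A : Set M) {n : ℕ} (b : Fin n → M) : Set (L.Formula (↥A ⊕ Fin n)) :=
  {φ | φ.Realize (paramAssign A b)}

/-- A complete `n`-type over `A`, finitely satisfiable in `M` (equivalently, consistent
with the complete theory of `M` with constants for `A`). -/
def IsTypeOver (A : Set M) (n : ℕ) (p : Set (L.Formula (↥A ⊕ Fin n))) : Prop :=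
  (∀ φ : L.Formula (↥A ⊕ Fin n), φ ∈ p ∨ φ.not ∈ p) ∧
    ∀ fs : Finset (L.Formula (↥A ⊕ Fin n)), ↑fs ⊆ p →
      ∃ b : Fin n → M, ∀ φ ∈ fs, φ.Realize (paramAssign A b)

/-- `φ` isolates the set of formulas `p` over `T`. -/
def IsolatesSet {β : Type*} (φ : L.Formula β) (p : Set (L.Formula β)) : Prop :=
  φ ∈ p ∧ ∀ ψ ∈ p, T ⊨ᵇ φ.imp ψ

/-- The `∅`-type in variables `Fin m ⊕ Fin n` obtained from `p` by plugging the
parameters `a ∈ A^m` into the first block of variables. -/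
def restrTp (A : Set M) {n m : ℕ} (p : Set (L.Formula (↥A ⊕ Fin n))) (a : Fin m → ↥A) :
    Set (L.Formula (Fin m ⊕ Fin n)) :=
  {ψ | ψ.relabel (Sum.elim (fun i => Sum.inl (a i)) Sum.inr) ∈ p}

/-- `p ∈ S^n_{at}(A)`:  `p` is a complete type over `A` all of whose realizations keep
`A` atomic, i.e. every finite tuple from `A` together with the realization has isolated
type. -/
def IsAtomicType (A : Set M) {n : ℕ} (p : Set (L.Formula (↥A ⊕ Fin n))) : Prop :=
  IsTypeOver A n p ∧ ∀ (m : ℕ) (a : Fin m → ↥A),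
    ∃ φ : L.Formula (Fin m ⊕ Fin n), IsolatesSet T φ (restrTp A p a)

/-- `p ∈ S^{n,β}_{at}(A)` (for `Sl = L_β`): the isolating formulas can be chosen in
`Sl`. -/
def IsAtomicTypeIn (Sl : Sublanguage L) (A : Set M) {n : ℕ}
    (p : Set (L.Formula (↥A ⊕ Fin n))) : Prop :=
  IsTypeOver A n p ∧ ∀ (m : ℕ) (a : Fin m → ↥A),
    ∃ φ : L.Formula (Fin m ⊕ Fin n), Sl.IsBForm φ ∧ IsolatesSet T φ (restrTp A p a)

/-- The space `S^n_{at}(A)`. -/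
def SnAt (A : Set M) (n : ℕ) : Set (Set (L.Formula (↥A ⊕ Fin n))) :=
  {p | IsAtomicType T A p}

/-- The space `S^{n,β}_{at}(A)`. -/
def SnAtIn (Sl : Sublanguage L) (A : Set M) (n : ℕ) : Set (Set (L.Formula (↥A ⊕ Fin n))) :=
  {p | IsAtomicTypeIn T Sl A p}

/-- The topology on `S^n_{at}(A)`, generated by the basic (cl)open sets `[φ]`. -/
instance topSnAt (A : Set M) (n : ℕ) : TopologicalSpace ↥(SnAt T A n) :=
  TopologicalSpace.generateFrom
    {U | ∃ φ : L.Formula (↥A ⊕ Fin n), U = {p : ↥(SnAt T A n) | φ ∈ p.1}}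

/-! ### Total transcendence -/

/-- `K_T` is totally transcendental at `α`: for any model and any `α`-base `A` in it, the
space `S_{at}(A) = ⋃_n S^n_{at}(A)` is scattered (has no nonempty perfect subset). -/
def TTat (F : Filtration L) (α : Ordinal.{0}) : Prop :=
  ∀ (M' : Type (max u v)) [L.Structure M'], M' ⊨ T →
    ∀ A : Set M', IsBaseAt T F α A →
      ∀ C : Set (Σ n : ℕ, ↥(SnAt T A n)), Perfect C → C = ∅

/-- The set of `α ∈ C₀` at which `K_T` is totally transcendental contains a club. -/
def ClubTT (F : Filtration L) (C₀ : Set Ordinal.{0}) : Prop :=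
  ∃ C, IsClubBelow C ∧ C ⊆ C₀ ∧ ∀ α ∈ C, TTat T F α

/-- `K_T` is club totally transcendental. -/
def IsClubTT : Prop :=
  ∃ (F : Filtration L) (C₀ : Set Ordinal.{0}), SuitableClub T F C₀ ∧ ClubTT T F C₀

/-! ### Atomic, constructible models; the conclusion of the main theorem -/

/-- `φ` isolates the type of the tuple `a` over `∅`, and `M` is atomic. -/
def IsAtomicModel (N : Type w) [L.Structure N] : Prop :=
  N ⊨ T ∧ ∀ (n : ℕ) (a : Fin n → N), ∃ φ : L.Formula (Fin n),
    φ.Realize a ∧ ∀ ψ : L.Formula (Fin n), ψ.Realize a → T ⊨ᵇ φ.imp ψ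

/-- The type of `b` over the parameter set `A ⊆ N` is isolated (by a single formula with
finitely many parameters from `A`). -/
def IsolatedOver (T' : L.Theory) {N : Type w} [L.Structure N] (A : Set N) (b : N) : Prop :=
  ∃ (m : ℕ) (a : Fin m → N) (φ : L.Formula (Fin (m + 1))),
    (∀ i, a i ∈ A) ∧ φ.Realize (Fin.snoc a b) ∧
      ∀ (k : ℕ) (c : Fin k → N) (ψ : L.Formula (Fin (m + k + 1))), (∀ i, c i ∈ A) →
        ψ.Realize (Fin.snoc (Fin.append a c) b) →
          ∀ b' : N, φ.Realize (Fin.snoc a b') → ψ.Realize (Fin.snoc (Fin.append a c) b')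

/-- `N` is a constructible model of `T`. -/
def IsConstructible (N : Type w) [L.Structure N] : Prop :=
  N ⊨ T ∧ ∃ (δ : Ordinal.{w}) (e : {o : Ordinal.{w} // o < δ} → N), Function.Surjective e ∧
    ∀ β : {o : Ordinal.{w} // o < δ}, IsolatedOver T (e '' {γ | γ.1 < β.1}) (e β)

/-- `T` has `2^{ℵ₁}` pairwise non-isomorphic atomic models of size `ℵ₁`. -/
def HasManyAtomicModels : Prop :=
  ∃ (ι : Type (max u v)) (Ms : ι → Theory.ModelType.{u, v, max u v} T),
    #ι = 2 ^ Cardinal.aleph 1 ∧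
    (∀ i, IsAtomicModel T (Ms i) ∧ #(Ms i) = Cardinal.aleph 1) ∧
    ∀ i j, i ≠ j → IsEmpty ((Ms i) ≃[L] (Ms j))


/-! ### Amalgamation -/

/-- `g` is a partial elementary map defined on `A`. -/
def PartElem {N : Type*} [L.Structure N] (A : Set M) (g : ↥A → N) : Prop :=
  ∀ (n : ℕ) (φ : L.Formula (Fin n)) (a : Fin n → ↥A),
    φ.Realize (fun i => (a i : M)) ↔ φ.Realize fun i => g (a i)

/-- `K_T` has the amalgamation property at `α`: any two atomic sets over an `α`-base can
be amalgamated into an atomic set (inside some model of `T`) by elementary maps agreeing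
on the base. -/
def APat (F : Filtration L) (α : Ordinal.{0}) : Prop :=
  ∀ (M' : Type (max u v)) [L.Structure M'], M' ⊨ T →
    ∀ A₀ A₁ A₂ : Set M', IsBaseAt T F α A₀ → IsAtomicSet T A₁ → IsAtomicSet T A₂ →
      (h1 : A₀ ⊆ A₁) → (h2 : A₀ ⊆ A₂) →
      ∃ (N : Theory.ModelType.{u, v, max u v} T) (f₁ : ↥A₁ → N) (f₂ : ↥A₂ → N),
        PartElem (L := L) A₁ f₁ ∧ PartElem (L := L) A₂ f₂ ∧
        (∀ (a : M') (ha : a ∈ A₀), f₁ ⟨a, h1 ha⟩ = f₂ ⟨a, h2 ha⟩) ∧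
        IsAtomicSet T (Set.range f₁ ∪ Set.range f₂)

/-! ### Density of isolated types -/

/-- The isolated points are dense in each `S^n_{at}(A)`. -/
def IsolDense (A : Set M) : Prop :=
  ∀ n : ℕ, Dense {p : ↥(SnAt T A n) | IsOpen ({p} : Set ↥(SnAt T A n))}

/-- `α ∈ Spec_{K_T}(CS)`: the isolated types are dense in `S_{at}(A)` for any `α`-base
`A` (in any model of `T`). -/
def CSat (F : Filtration L) (α : Ordinal.{0}) : Prop :=
  ∀ (M' : Type (max u v)) [L.Structure M'], M' ⊨ T →
    ∀ A : Set M', IsBaseAt T F α A → IsolDense T A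


/-! ### Auxiliary lemmas for Statement 16 -/

section Aux16

section Transfer
variable {γ : Type*} [DecidableEq γ] (φ : L.Formula γ)

@[reducible] private def trs16 : Set γ := ↑(BoundedFormula.freeVarFinset φ)

private noncomputable def tre16 : ↥(trs16 φ) ≃ Fin (Fintype.card ↥(trs16 φ)) :=
  Fintype.equivFin ↥(trs16 φ)

private noncomputable def trχ16 : L.Formula (Fin (Fintype.card ↥(trs16 φ))) :=
  (BoundedFormula.restrictFreeVar φ (Set.inclusion subset_rfl)).toFormula.relabel
    (Sum.elim ⇑(tre16 φ) Fin.elim0)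

private noncomputable def trg16 : Fin (Fintype.card ↥(trs16 φ)) → γ := fun i =>
  ↑((tre16 φ).symm i)

private theorem tr_key16 {P : Type*} [L.Structure P] (u : γ → P) :
    φ.Realize u ↔ (trχ16 φ).Realize (u ∘ trg16 φ) := by
  rw [show (trχ16 φ).Realize (u ∘ trg16 φ) ↔
      (BoundedFormula.restrictFreeVar φ (Set.inclusion subset_rfl)).toFormula.Realize
        ((u ∘ trg16 φ) ∘ (Sum.elim ⇑(tre16 φ) Fin.elim0)) from Formula.realize_relabel]
  rw [BoundedFormula.realize_toFormula]
  have h1 : (((u ∘ trg16 φ) ∘ Sum.elim ⇑(tre16 φ) Fin.elim0) ∘ Sum.inl)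
      = (u ∘ (Subtype.val : ↥(trs16 φ) → γ)) := by
    funext x
    simp [trg16]
  have h2 : (((u ∘ trg16 φ) ∘ Sum.elim ⇑(tre16 φ) Fin.elim0) ∘ Sum.inr)
      = (default : Fin 0 → P) := Subsingleton.elim _ _
  rw [h1, h2]
  exact (BoundedFormula.realize_restrictFreeVar' subset_rfl).symm

end Transfer

private theorem realize_transfer16 {P₁ : Type*} {P₂ : Type*} [L.Structure P₁] [L.Structure P₂]
    {γ : Type*} (w₁ : γ → P₁) (w₂ : γ → P₂)
    (h : ∀ (k : ℕ) (ψ : L.Formula (Fin k)) (g : Fin k → γ),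
      ψ.Realize (w₁ ∘ g) ↔ ψ.Realize (w₂ ∘ g))
    (φ : L.Formula γ) : φ.Realize w₁ ↔ φ.Realize w₂ := by
  classical
  rw [tr_key16 φ w₁, tr_key16 φ w₂]
  exact h _ (trχ16 φ) (trg16 φ)

section Subst
variable {β : Type} [Fintype β] {γ : Type} [Fintype γ]

/-- `substForm16 φ ρ` is `∃ ȳ (φ(ȳ) ∧ ⋀ᵢ xᵢ = y_{ρ i})`. -/
private noncomputable def substForm16 (φ : L.Formula β) (ρ : γ → β) : L.Formula γ :=
  ((φ.relabel Sum.inr) ⊓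
    (((Finset.univ : Finset γ).toList.map
      (fun i => Term.equal (Term.var (Sum.inl i)) (Term.var (Sum.inr (ρ i))))).foldr
        (· ⊓ ·) ⊤)).iExs β

private theorem realize_substForm16 {φ : L.Formula β} {ρ : γ → β} {P : Type*} [L.Structure P]
    {v : γ → P} : (substForm16 φ ρ).Realize v ↔
      ∃ w : β → P, φ.Realize w ∧ ∀ i : γ, v i = w (ρ i) := by
  classical
  rw [substForm16, Formula.realize_iExs]
  apply exists_congr
  intro w
  have hid : (fun a => Sum.elim v w (id a)) = Sum.elim v w := rfl
  rw [Formula.realize_inf, Formula.realize_relabel,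
    show Sum.elim v w ∘ (Sum.inr : β → γ ⊕ β) = w from rfl]
  apply and_congr Iff.rfl
  rw [show ((((Finset.univ : Finset γ).toList.map
      (fun i => Term.equal (Term.var (Sum.inl i)) (Term.var (Sum.inr (ρ i))))).foldr
        (· ⊓ ·) ⊤) : L.Formula (γ ⊕ β)).Realize (Sum.elim v w) ↔ _ from
    BoundedFormula.realize_foldr_inf _ (Sum.elim v w) default]
  constructor
  · intro h i
    have := h (Term.equal (Term.var (Sum.inl i)) (Term.var (Sum.inr (ρ i)))) (by simp)
    exact Formula.realize_equal.1 this
  · intro h ψe hψe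
    rw [List.mem_map] at hψe
    obtain ⟨i, -, rfl⟩ := hψe
    exact Formula.realize_equal.2 (h i)

private theorem isol_subst16 (Tb : L.Theory) {P : Type*} [L.Structure P]
    {u : β → P} {φ : L.Formula β}
    (h1 : φ.Realize u) (h2 : ∀ ψ : L.Formula β, ψ.Realize u → Tb ⊨ᵇ φ.imp ψ)
    (ρ : γ → β) :
    ∃ θ : L.Formula γ, θ.Realize (u ∘ ρ) ∧
      ∀ ψ : L.Formula γ, ψ.Realize (u ∘ ρ) → Tb ⊨ᵇ θ.imp ψ := by
  refine ⟨substForm16 φ ρ, realize_substForm16.2 ⟨u, h1, fun i => rfl⟩, ?_⟩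
  intro ψ hψ
  have hψβ : (ψ.relabel ρ).Realize u := by rw [Formula.realize_relabel]; exact hψ
  have hT := h2 _ hψβ
  rw [Theory.models_formula_iff] at hT ⊢
  intro Mt v
  rw [Formula.realize_imp]
  intro hθv
  obtain ⟨w, hφw, heq⟩ := realize_substForm16.1 hθv
  have himp := hT Mt w
  rw [Formula.realize_imp, Formula.realize_relabel] at himp
  have hr := himp hφw
  rwa [show w ∘ ρ = v from funext fun i => (heq i).symm] at hr

end Subst

private theorem exists_realization16 {Mb : Type (max u v)}
    [L.Structure Mb] [Nonempty Mb] {A : Set Mb} {n : ℕ} {p : Set (L.Formula (↥A ⊕ Fin n))}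
    (hfin : ∀ fs : Finset (L.Formula (↥A ⊕ Fin n)), ↑fs ⊆ p →
      ∃ b : Fin n → Mb, ∀ φ ∈ fs, φ.Realize (Sum.elim (Subtype.val : ↥A → Mb) b)) :
    ∃ (N : Type (max u v)) (_ : L.Structure N) (j : Mb → N) (c : Fin n → N),
      (∀ (k : ℕ) (ψ : L.Formula (Fin k)) (a : Fin k → Mb),
        ψ.Realize (fun i => j (a i)) ↔ ψ.Realize a) ∧
      (∀ φ ∈ p, φ.Realize (Sum.elim (fun a : ↥A => j ↑a) c)) := by
  classical
  set σA : ↥A ⊕ Fin n → Mb ⊕ Fin n := Sum.map (Subtype.val) id with hσA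
  set S₁ : Set (L.Formula (Mb ⊕ Fin n)) :=
    {χ | ∃ (k : ℕ) (ψ : L.Formula (Fin k)) (a : Fin k → Mb),
      χ = ψ.relabel (fun i => Sum.inl (a i)) ∧ ψ.Realize a} with hS₁
  set S₂ : Set (L.Formula (Mb ⊕ Fin n)) := {χ | ∃ φ ∈ p, χ = φ.relabel σA} with hS₂
  set Θ : (L[[Mb ⊕ Fin n]]).Theory := Formula.equivSentence '' (S₁ ∪ S₂) with hΘ
  have hsat : Θ.IsSatisfiable := by
    rw [Theory.isSatisfiable_iff_isFinitelySatisfiable]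
    intro T₀ hT₀
    set pk : (L[[Mb ⊕ Fin n]]).Sentence → L.Formula (↥A ⊕ Fin n) := fun χs =>
      if h : ∃ φ ∈ p, Formula.equivSentence (φ.relabel σA) = χs then h.choose else ⊥ with hpk
    set fs : Finset (L.Formula (↥A ⊕ Fin n)) :=
      (T₀.filter (fun χs => ∃ φ ∈ p, Formula.equivSentence (φ.relabel σA) = χs)).image pk
      with hfs
    have hfsp : ↑fs ⊆ p := by
      intro x hx
      rw [hfs] at hx
      simp only [Finset.coe_image, Set.mem_image, Finset.mem_coe, Finset.mem_filter] at hx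
      obtain ⟨χs, ⟨-, hex⟩, rfl⟩ := hx
      show pk χs ∈ p
      have hch : pk χs = hex.choose := dif_pos hex
      rw [hch]
      exact hex.choose_spec.1
    obtain ⟨b, hb⟩ := hfin fs hfsp
    letI : (constantsOn (Mb ⊕ Fin n)).Structure Mb := constantsOn.structure (Sum.elim id b)
    haveI : Mb ⊨ (↑T₀ : (L[[Mb ⊕ Fin n]]).Theory) := by
      rw [Theory.model_iff]
      intro χs hχs
      obtain ⟨χ, hχ, rfl⟩ := hT₀ hχs
      rw [Formula.realize_equivSentence]
      have hcon : (fun a => ((L.con a : Mb))) = Sum.elim id b := rfl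
      rw [hcon]
      rcases hχ with h1 | h2
      · obtain ⟨k, ψ, a, rfl, hre⟩ := h1
        rw [Formula.realize_relabel]
        have : (Sum.elim id b ∘ fun i => Sum.inl (a i)) = a := rfl
        rwa [this]
      · obtain ⟨φ, hφp, rfl⟩ := h2
        have hex : ∃ φ' ∈ p, Formula.equivSentence (φ'.relabel σA)
            = Formula.equivSentence (φ.relabel σA) := ⟨φ, hφp, rfl⟩
        have hmem : pk (Formula.equivSentence (φ.relabel σA)) ∈ fs := by
          rw [hfs]
          exact Finset.mem_image_of_mem pk (Finset.mem_filter.2 ⟨hχs, hex⟩)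
        have hch : pk (Formula.equivSentence (φ.relabel σA)) = hex.choose := dif_pos hex
        have heq : (pk (Formula.equivSentence (φ.relabel σA))).relabel σA = φ.relabel σA := by
          rw [hch]
          exact Formula.equivSentence.injective hex.choose_spec.2
        rw [← heq, Formula.realize_relabel]
        have : (Sum.elim id b ∘ σA) = Sum.elim (Subtype.val : ↥A → Mb) b := by
          funext x; cases x <;> rfl
        rw [this]
        exact hb _ hmem
    exact ⟨Theory.ModelType.of _ Mb⟩
  obtain ⟨N₀⟩ := hsat
  letI iN : L.Structure N₀ := (L.lhomWithConstants (Mb ⊕ Fin n)).reduct N₀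
  haveI : (L.lhomWithConstants (Mb ⊕ Fin n)).IsExpansionOn N₀ :=
    LHom.isExpansionOn_reduct _ _
  set jc : Mb ⊕ Fin n → N₀ := fun a => ((L.con a : N₀)) with hjc
  have hΘreal : ∀ χ : L.Formula (Mb ⊕ Fin n), χ ∈ S₁ ∪ S₂ → χ.Realize jc := by
    intro χ hχ
    have hm : Formula.equivSentence χ ∈ Θ := Set.mem_image_of_mem _ hχ
    have h2 : (N₀ : Type _) ⊨ Formula.equivSentence χ :=
      Theory.realize_sentence_of_mem Θ hm
    rwa [Formula.realize_equivSentence] at h2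
  refine ⟨(N₀ : Type (max u v)), iN, fun m => jc (Sum.inl m), fun i => jc (Sum.inr i), ?_, ?_⟩
  · intro k ψ a
    constructor
    · intro h
      by_contra hn
      have hmem : (ψ.not).relabel (fun i => Sum.inl (a i) : Fin k → Mb ⊕ Fin n) ∈ S₁ :=
        ⟨k, ψ.not, a, rfl, Formula.realize_not.2 hn⟩
      have := hΘreal _ (Or.inl hmem)
      rw [Formula.realize_relabel, Formula.realize_not] at this
      exact this h
    · intro h
      have hmem : ψ.relabel (fun i => Sum.inl (a i) : Fin k → Mb ⊕ Fin n) ∈ S₁ :=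
        ⟨k, ψ, a, rfl, h⟩
      have := hΘreal _ (Or.inl hmem)
      rwa [Formula.realize_relabel] at this
  · intro φ hφ
    have := hΘreal _ (Or.inr ⟨φ, hφ, rfl⟩)
    rw [Formula.realize_relabel] at this
    have hco : (jc ∘ σA) = Sum.elim (fun a : ↥A => jc (Sum.inl ↑a)) (fun i => jc (Sum.inr i)) := by
      funext x; cases x <;> rfl
    rwa [hco] at this

end Aux16

/-- If `α ∈ Spec_{K_T}(AP)`, `A` is an `α`-base, `B ⊇ A` is an atomic
set, and `p ∈ S_{at}(A)`, then `p` extends to a type in `S_{at}(B)`. -/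
theorem statement16 {L : FirstOrder.Language.{u, v}} (T : L.Theory)
    (hcomp : T.IsComplete) (hcard : L.card = Cardinal.aleph 1)
    (hatomic : ∃ N : Theory.ModelType.{u, v, max u v} T, IsAtomicModel T N)
    (F : Filtration L) (C₀ : Set Ordinal.{0}) (hsuit : SuitableClub T F C₀)
    (α : Ordinal.{0}) (hα : α ∈ C₀) (hAP : APat T F α)
    (M : Type (max u v)) [L.Structure M] (hM : M ⊨ T)
    (A B : Set M) (hA : IsBaseAt T F α A) (hB : IsAtomicSet T B) (hAB : A ⊆ B)
    (n : ℕ) (p : Set (L.Formula (↥A ⊕ Fin n))) (hp : IsAtomicType T A p) :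
    ∃ q : Set (L.Formula (↥B ⊕ Fin n)), IsAtomicType T B q ∧
      ∀ φ : L.Formula (↥A ⊕ Fin n),
        φ ∈ p ↔ φ.relabel (Sum.map (Set.inclusion hAB) id) ∈ q := by
  classical
  rcases isEmpty_or_nonempty M with hME | hMne
  · -- `M` is empty
    obtain ⟨b0, -⟩ := hp.1.2 ∅ (by simp)
    cases n with
    | succ n' => exact (hME.false (b0 0)).elim
    | zero =>
      haveI hBempty : IsEmpty ↥B := ⟨fun b => hME.false b.1⟩
      haveI hAempty : IsEmpty ↥A := ⟨fun a => hME.false a.1⟩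
      have hpm : ∀ φ : L.Formula (↥A ⊕ Fin 0), φ ∈ p ↔ φ.Realize (paramAssign A b0) := by
        intro φ
        constructor
        · intro h
          obtain ⟨b, hb⟩ := hp.1.2 {φ} (by simpa using h)
          have := hb φ (Finset.mem_singleton_self φ)
          rwa [Subsingleton.elim (paramAssign A b0) (paramAssign A b)]
        · intro h
          rcases hp.1.1 φ with h1 | h1
          · exact h1
          · exfalso
            obtain ⟨b, hb⟩ := hp.1.2 {φ.not} (by simpa using h1)
            have h2 := hb _ (Finset.mem_singleton_self _)
            rw [Formula.realize_not] at h2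
            exact h2 (by rwa [Subsingleton.elim (paramAssign A b) (paramAssign A b0)])
      set ψψ : L.Formula (Fin 0 ⊕ Fin 0) :=
        (BoundedFormula.ex (Term.bdEqual (Term.var (Sum.inr 0)) (Term.var (Sum.inr 0)))).not
        with hψψ
      have hψψreal : ∀ {P : Type (max u v)} [L.Structure P] (v : Fin 0 ⊕ Fin 0 → P),
          ψψ.Realize v ↔ IsEmpty P := by
        intro P _ v
        rw [hψψ]
        show (BoundedFormula.ex _).not.Realize v default ↔ _
        rw [BoundedFormula.realize_not, BoundedFormula.realize_ex]
        simp only [BoundedFormula.realize_bdEqual]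
        constructor
        · intro h
          exact ⟨fun a => h ⟨a, trivial⟩⟩
        · rintro h ⟨a, -⟩
          exact h.false a
      obtain ⟨φ₀, hφ₀in, hφ₀imp⟩ := hp.2 0 Fin.elim0
      have hψψmem : ψψ ∈ restrTp A p Fin.elim0 := by
        show ψψ.relabel _ ∈ p
        rw [hpm, Formula.realize_relabel]
        exact (hψψreal _).2 hME
      have hTnot : T ⊨ᵇ φ₀.not := by
        have himp := hφ₀imp ψψ hψψmem
        rw [Theory.models_formula_iff] at himp ⊢
        intro Mt v
        rw [Formula.realize_not]
        intro hreal
        have h2 := himp Mt v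
        rw [Formula.realize_imp] at h2
        have h3 := (hψψreal _).1 (h2 hreal)
        obtain ⟨x⟩ := (inferInstance : Nonempty Mt)
        exact h3.false x
      have hφ₀M : φ₀.Realize ((paramAssign A b0) ∘
          (Sum.elim (fun i => Sum.inl (Fin.elim0 i)) Sum.inr)) := by
        have h1 := (hpm _).1 hφ₀in
        rwa [Formula.realize_relabel] at h1
      refine ⟨{ψ | ψ.Realize (paramAssign B b0)}, ⟨⟨?_, ?_⟩, ?_⟩, ?_⟩
      · intro ψ
        by_cases h : ψ.Realize (paramAssign B b0)
        · exact Or.inl h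
        · exact Or.inr (Formula.realize_not.2 h)
      · intro fs hfs
        exact ⟨b0, fun ψ hψ => hfs hψ⟩
      · intro m
        cases m with
        | succ m' => exact fun abar => isEmptyElim (abar 0)
        | zero =>
          intro abar
          refine ⟨φ₀, ?_, ?_⟩
          · show (φ₀.relabel _).Realize (paramAssign B b0)
            rw [Formula.realize_relabel]
            rwa [Subsingleton.elim ((paramAssign B b0) ∘
              (Sum.elim (fun i => Sum.inl (abar i)) Sum.inr)) ((paramAssign A b0) ∘
              (Sum.elim (fun i => Sum.inl (Fin.elim0 i)) Sum.inr))]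
          · intro ψ hψ
            rw [Theory.models_formula_iff] at hTnot ⊢
            intro Mt v
            rw [Formula.realize_imp]
            intro hreal
            have h2 := hTnot Mt v
            rw [Formula.realize_not] at h2
            exact (h2 hreal).elim
      · intro φ
        rw [hpm φ]
        constructor
        · intro h
          show (φ.relabel _).Realize (paramAssign B b0)
          rw [Formula.realize_relabel]
          rwa [Subsingleton.elim ((paramAssign B b0) ∘
            (Sum.map (Set.inclusion hAB) id)) (paramAssign A b0)]
        · intro h
          have h1 : (φ.relabel (Sum.map (Set.inclusion hAB) id)).Realize
            (paramAssign B b0) := h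
          rw [Formula.realize_relabel] at h1
          rwa [Subsingleton.elim ((paramAssign B b0) ∘
            (Sum.map (Set.inclusion hAB) id)) (paramAssign A b0)] at h1
  · -- `M` is nonempty: the main case
    obtain ⟨N₀, iN, j, c, hj, hc⟩ := exists_realization16 (A := A) (p := p) hp.1.2
    letI := iN
    set eN : ↥A ⊕ Fin n → N₀ := Sum.elim (fun a : ↥A => j ↑a) c with heN
    have hpm : ∀ φ : L.Formula (↥A ⊕ Fin n), φ ∈ p ↔ φ.Realize eN := by
      intro φ
      refine ⟨fun h => hc φ h, fun h => ?_⟩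
      rcases hp.1.1 φ with h1 | h1
      · exact h1
      · exact absurd h (Formula.realize_not.1 (hc _ h1))
    have hNT : N₀ ⊨ T := by
      rw [Theory.model_iff]
      intro φ0 hφ0
      have hM0 : Formula.Realize φ0 (default : Empty → M) := by
        haveI := hM
        exact Theory.realize_sentence_of_mem T hφ0
      have h1 := (realize_transfer16 (default : Empty → M)
        (fun x : Empty => j ((default : Empty → M) x))
        (fun k ψ g => (hj k ψ ((default : Empty → M) ∘ g)).symm) φ0).1 hM0
      have hdef : (fun x : Empty => j ((default : Empty → M) x)) = (default : Empty → N₀) :=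
        Subsingleton.elim _ _
      rw [hdef] at h1
      exact h1
    have pull : ∀ {S : Set M} {k : ℕ} (a' : Fin k → N₀), (∀ i, a' i ∈ j '' S) →
        ∃ a : Fin k → M, (∀ i, a i ∈ S) ∧ (fun i => j (a i)) = a' := by
      intro S k a' h
      choose a h1 h2 using fun i => h i
      exact ⟨a, h1, funext h2⟩
    have hfun : ∀ {k : ℕ} (f : L.Functions k) (a : Fin k → M),
        Structure.funMap f (fun i => j (a i)) = j (Structure.funMap f a) := by
      intro k f a
      have h1 : (Term.equal (Term.func f (fun i => Term.var (Fin.castSucc i)))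
          (Term.var (Fin.last k)) : L.Formula (Fin (k+1))).Realize
            (Fin.snoc a (Structure.funMap f a)) := by
        simp [Formula.realize_equal, Term.realize]
      have h2 := (hj (k+1) _ _).2 h1
      simp only [Formula.realize_equal, Term.realize, Fin.snoc_castSucc,
        Fin.snoc_last] at h2
      exact h2
    have hIsol : ∀ {k : ℕ} (a : Fin k → M) (φk : L.Formula (Fin k)),
        IsolTp T a φk → IsolTp (M := N₀) T (fun i => j (a i)) φk := by
      rintro k a φk ⟨ha1, ha2⟩
      exact ⟨(hj k φk a).2 ha1, fun ψ hψ => ha2 ψ ((hj k ψ a).1 hψ)⟩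
    have himage : ∀ {S : Set M}, IsAtomicSet T S → IsAtomicSet (M := N₀) T (j '' S) := by
      rintro S ⟨hc1, hc2⟩
      refine ⟨hc1.image j, ?_⟩
      intro k a' ha'
      obtain ⟨a, haS, rfl⟩ := pull a' ha'
      obtain ⟨φk, hφk⟩ := hc2 k a haS
      exact ⟨φk, hIsol a φk hφk⟩
    have hsnoc : ∀ {P : Type (max u v)} (xs : Fin 0 → P) (z : P),
        Fin.snoc xs z = fun _ : Fin 1 => z := by
      intro P xs z
      funext i
      have h0 : i = Fin.last 0 := Fin.ext (Nat.lt_one_iff.1 i.isLt)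
      rw [h0, Fin.snoc_last]
    have hbase : IsBaseAt (M := N₀) T F α (j '' A) := by
      obtain ⟨⟨hAc, hAiso⟩, hAcl, hAtv⟩ := hA
      refine ⟨⟨hAc.image j, ?_⟩, ?_, ?_⟩
      · intro k a' ha'
        obtain ⟨a, haS, rfl⟩ := pull a' ha'
        obtain ⟨φk, hbf, h1, h2⟩ := hAiso k a haS
        exact ⟨φk, hbf, (hj k φk a).2 h1, fun ψ hψ => h2 ψ ((hj k ψ a).1 hψ)⟩
      · intro k f hf a' ha'
        obtain ⟨a, haS, rfl⟩ := pull a' ha'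
        rw [hfun]
        exact Set.mem_image_of_mem j (hAcl k f hf a haS)
      · intro k φb hbf a' ha' hex
        obtain ⟨a, haA, rfl⟩ := pull a' ha'
        obtain ⟨bN, hbN⟩ := hex
        have hexN : Formula.Realize (BoundedFormula.ex φb) (fun i => j (a i)) := by
          show (BoundedFormula.ex φb).Realize (fun i => j (a i)) default
          rw [BoundedFormula.realize_ex]
          exact ⟨bN, by rwa [hsnoc]⟩
        have hexM := (hj k (BoundedFormula.ex φb) a).1 hexN
        have hexM' : (BoundedFormula.ex φb).Realize a default := hexM
        rw [BoundedFormula.realize_ex] at hexM'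
        obtain ⟨bm, hbm⟩ := hexM'
        rw [hsnoc] at hbm
        obtain ⟨bm', hbm'A, hbm'r⟩ := hAtv k φb hbf a haA ⟨bm, hbm⟩
        refine ⟨j bm', Set.mem_image_of_mem j hbm'A, ?_⟩
        have hMf : φb.toFormula.Realize (Sum.elim a (fun _ : Fin 1 => bm')) := by
          rw [BoundedFormula.realize_toFormula]
          exact hbm'r
        have hNf := (realize_transfer16 (Sum.elim a (fun _ : Fin 1 => bm'))
          (fun x => j (Sum.elim a (fun _ : Fin 1 => bm') x))
          (fun k' ψ g => (hj k' ψ _).symm) φb.toFormula).1 hMf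
        rw [BoundedFormula.realize_toFormula] at hNf
        exact hNf
    have hA2 : IsAtomicSet (M := N₀) T (j '' A ∪ Set.range c) := by
      constructor
      · exact (hA.1.1.image j).union (Set.countable_range c)
      · intro k d hd
        have hsel : ∀ i, ∃ s : ↥A ⊕ Fin n, eN s = d i := by
          intro i
          rcases hd i with h | h
          · obtain ⟨x, hx, hjx⟩ := h
            exact ⟨Sum.inl ⟨x, hx⟩, hjx⟩
          · obtain ⟨t, ht⟩ := h
            exact ⟨Sum.inr t, ht⟩
        choose σ hσ using hsel
        have key : ∀ (m : ℕ) (abar : Fin m → ↥A), ∃ φk : L.Formula (Fin m ⊕ Fin n),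
            φk.Realize (Sum.elim (fun i => j ↑(abar i)) c) ∧
            ∀ ψ : L.Formula (Fin m ⊕ Fin n),
              ψ.Realize (Sum.elim (fun i => j ↑(abar i)) c) → T ⊨ᵇ φk.imp ψ := by
          intro m abar
          obtain ⟨φk, hin, himp⟩ := hp.2 m abar
          have hre : ∀ ψ : L.Formula (Fin m ⊕ Fin n),
              (ψ.relabel (Sum.elim (fun i => Sum.inl (abar i)) Sum.inr)).Realize eN
                ↔ ψ.Realize (Sum.elim (fun i => j ↑(abar i)) c) := by
            intro ψ
            rw [Formula.realize_relabel]
            have h3 : (eN ∘ Sum.elim (fun i => Sum.inl (abar i)) Sum.inr)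
                = Sum.elim (fun i => j ↑(abar i)) c := by
              funext x; cases x <;> rfl
            rw [h3]
          have hiff : ∀ ψ : L.Formula (Fin m ⊕ Fin n),
              ψ.Realize (Sum.elim (fun i => j ↑(abar i)) c) ↔ ψ ∈ restrTp A p abar := by
            intro ψ
            constructor
            · intro h
              exact (hpm _).2 ((hre ψ).2 h)
            · intro h
              exact (hre ψ).1 ((hpm _).1 h)
          exact ⟨φk, (hiff φk).2 hin, fun ψ hψ => himp ψ ((hiff ψ).1 hψ)⟩
        rcases isEmpty_or_nonempty ↥A with hAe | hAne
        · obtain ⟨φk, h1, h2⟩ := key 0 Fin.elim0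
          obtain ⟨θ, hθ1, hθ2⟩ := isol_subst16 T h1 h2
            (fun i : Fin k => (Sum.inr ((σ i).elim (fun a => isEmptyElim a) id) :
              Fin 0 ⊕ Fin n))
          have hud : ((Sum.elim (fun i : Fin 0 => j ↑(Fin.elim0 i)) c) ∘
              (fun i : Fin k => (Sum.inr ((σ i).elim (fun a => isEmptyElim a) id) :
                Fin 0 ⊕ Fin n))) = d := by
            funext i
            rcases hs : σ i with x | t
            · exact isEmptyElim x
            · have h4 := hσ i
              rw [hs] at h4
              simpa [hs, heN] using h4
          refine ⟨θ, ?_⟩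
          rw [← hud]
          exact ⟨hθ1, hθ2⟩
        · obtain ⟨a₀⟩ := hAne
          obtain ⟨φk, h1, h2⟩ := key k (fun i => (σ i).elim id (fun _ => a₀))
          obtain ⟨θ, hθ1, hθ2⟩ := isol_subst16 T h1 h2
            (fun i : Fin k => ((σ i).elim (fun _ => Sum.inl i) Sum.inr : Fin k ⊕ Fin n))
          have hud : ((Sum.elim (fun i : Fin k => j ↑((σ i).elim id (fun _ => a₀))) c) ∘
              (fun i : Fin k => ((σ i).elim (fun _ => Sum.inl i) Sum.inr :
                Fin k ⊕ Fin n))) = d := by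
            funext i
            have h4 := hσ i
            rcases hs : σ i with x | t <;> rw [hs] at h4
            · simpa [hs, heN] using h4
            · simpa [hs, heN] using h4
          refine ⟨θ, ?_⟩
          rw [← hud]
          exact ⟨hθ1, hθ2⟩
    obtain ⟨N', f₁, f₂, hel1, hel2, hagr, hun⟩ :=
      hAP N₀ hNT (j '' A) (j '' B) (j '' A ∪ Set.range c) hbase (himage hB) hA2
        (Set.image_mono (f := j) hAB) Set.subset_union_left
    set g₁ : ↥B → N' := fun b => f₁ ⟨j ↑b, Set.mem_image_of_mem j b.2⟩ with hg₁def
    set c' : Fin n → N' := fun i => f₂ ⟨c i, Or.inr ⟨i, rfl⟩⟩ with hc'def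
    set e' : ↥B ⊕ Fin n → N' := Sum.elim g₁ c' with he'def
    have hg₁ : ∀ (k : ℕ) (ψ : L.Formula (Fin k)) (g : Fin k → ↥B),
        ψ.Realize (fun i => (↑(g i) : M)) ↔ ψ.Realize (fun i => g₁ (g i)) := by
      intro k ψ g
      calc ψ.Realize (fun i => (↑(g i) : M))
          ↔ ψ.Realize (fun i => j ↑(g i)) := (hj k ψ _).symm
        _ ↔ ψ.Realize (fun i => g₁ (g i)) :=
          hel1 k ψ (fun i => ⟨j ↑(g i), Set.mem_image_of_mem j (g i).2⟩)
    refine ⟨{ψ | ψ.Realize e'}, ⟨⟨?_, ?_⟩, ?_⟩, ?_⟩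
    · intro ψ
      by_cases h : ψ.Realize e'
      · exact Or.inl h
      · exact Or.inr (Formula.realize_not.2 h)
    · intro fs hfs
      set χ : L.Formula (↥B ⊕ Fin n) := fs.toList.foldr (· ⊓ ·) ⊤ with hχdef
      have hχr : ∀ {P : Type (max u v)} [L.Structure P] (v : ↥B ⊕ Fin n → P),
          χ.Realize v ↔ ∀ ψ ∈ fs, ψ.Realize v := by
        intro P _ v
        have h1 : χ.Realize v ↔ ∀ ψ ∈ fs.toList, BoundedFormula.Realize ψ v default :=
          BoundedFormula.realize_foldr_inf fs.toList v (default : Fin 0 → P)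
        rw [h1]
        constructor
        · intro h ψ hψ
          exact h ψ (Finset.mem_toList.2 hψ)
        · intro h ψ hψ
          exact h ψ (Finset.mem_toList.1 hψ)
      have hθN : (χ.iExs (Fin n)).Realize g₁ := by
        rw [Formula.realize_iExs]
        exact ⟨c', (hχr e').2 (fun ψ hψ => hfs hψ)⟩
      have hθM := (realize_transfer16 (fun b : ↥B => (↑b : M)) g₁
        (fun k ψ g => hg₁ k ψ g) (χ.iExs (Fin n))).2 hθN
      rw [Formula.realize_iExs] at hθM
      obtain ⟨b, hbreal⟩ := hθM
      refine ⟨b, ?_⟩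
      intro ψ hψ
      exact (hχr (paramAssign B b)).1 hbreal ψ hψ
    · intro m abar
      set d : Fin m ⊕ Fin n → N' := Sum.elim (fun i => g₁ (abar i)) c' with hddef
      have hd : ∀ x, d x ∈ Set.range f₁ ∪ Set.range f₂ := by
        intro x
        cases x with
        | inl i => exact Or.inl ⟨_, rfl⟩
        | inr i => exact Or.inr ⟨_, rfl⟩
      obtain ⟨φ₀, hφ₀⟩ := hun.2 (m + n) (fun i => d (finSumFinEquiv.symm i)) (fun i => hd _)
      obtain ⟨θ, hθ1, hθ2⟩ := isol_subst16 T hφ₀.1 hφ₀.2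
        (⇑finSumFinEquiv : Fin m ⊕ Fin n → Fin (m + n))
      have hud : ((fun i => d (finSumFinEquiv.symm i)) ∘ ⇑finSumFinEquiv) = d := by
        funext x
        simp
      have hed : (e' ∘ Sum.elim (fun i => Sum.inl (abar i)) Sum.inr) = d := by
        funext x; cases x <;> rfl
      refine ⟨θ, ?_, ?_⟩
      · show (θ.relabel (Sum.elim (fun i => Sum.inl (abar i)) Sum.inr)).Realize e'
        rw [Formula.realize_relabel, hed, ← hud]
        exact hθ1
      · intro ψ hψ
        apply hθ2
        have h1 : (ψ.relabel (Sum.elim (fun i => Sum.inl (abar i)) Sum.inr)).Realize e' := hψ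
        rw [Formula.realize_relabel, hed, ← hud] at h1
        exact h1
    · intro φ
      rw [hpm φ]
      have hq : (φ.relabel (Sum.map (Set.inclusion hAB) id) ∈
          {ψ : L.Formula (↥B ⊕ Fin n) | ψ.Realize e'}) ↔
          φ.Realize (e' ∘ Sum.map (Set.inclusion hAB) id) := Formula.realize_relabel
      rw [hq]
      have htr := realize_transfer16
        (fun x : ↥A ⊕ Fin n => ((Sum.elim
          (fun a : ↥A => (⟨j ↑a, Or.inl (Set.mem_image_of_mem j a.2)⟩ :
            ↥(j '' A ∪ Set.range c)))
          (fun i => ⟨c i, Or.inr ⟨i, rfl⟩⟩) x : ↥(j '' A ∪ Set.range c)) : N₀))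
        (fun x : ↥A ⊕ Fin n => f₂ (Sum.elim
          (fun a : ↥A => (⟨j ↑a, Or.inl (Set.mem_image_of_mem j a.2)⟩ :
            ↥(j '' A ∪ Set.range c)))
          (fun i => ⟨c i, Or.inr ⟨i, rfl⟩⟩) x))
        (fun k ψ g => hel2 k ψ _) φ
      have h1 : (fun x : ↥A ⊕ Fin n => ((Sum.elim
          (fun a : ↥A => (⟨j ↑a, Or.inl (Set.mem_image_of_mem j a.2)⟩ :
            ↥(j '' A ∪ Set.range c)))
          (fun i => ⟨c i, Or.inr ⟨i, rfl⟩⟩) x : ↥(j '' A ∪ Set.range c)) : N₀)) = eN := by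
        funext x; cases x <;> rfl
      have h2 : (fun x : ↥A ⊕ Fin n => f₂ (Sum.elim
          (fun a : ↥A => (⟨j ↑a, Or.inl (Set.mem_image_of_mem j a.2)⟩ :
            ↥(j '' A ∪ Set.range c)))
          (fun i => ⟨c i, Or.inr ⟨i, rfl⟩⟩) x))
          = (e' ∘ Sum.map (Set.inclusion hAB) id) := by
        funext x
        cases x with
        | inl a => exact (hagr (j ↑a) (Set.mem_image_of_mem j a.2)).symm
        | inr i => rfl
      rw [h1, h2] at htr
      exact htr

end
end AbsPaper
end

section
/- Let T be a complete theory in a language L of size ℵ₁ with atomic models, A an atomic set, and β ∈ C₀. Then S^{n,β}_at(A) is a closed subset of S^n_at(A), and S^{n,β}_at(A) is a Polish space or empty. -/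
namespace AbsPaper

open FirstOrder FirstOrder.Language Cardinal Set

universe u v

noncomputable section

/-! ### Sublanguages and filtrations -/

variable {L : FirstOrder.Language.{u, v}}

/-! ### Complete formulas and suitable clubs -/

variable (T : L.Theory)

/-! ### Atomic sets and bases -/

variable {M : Type w} [L.Structure M]

/-! ### Auxiliary material for Statement 19 -/

section Aux19

open FirstOrder.Language

/-- Plugging parameters `a` into the first block of variables, as a relabelling map. -/
def ea {M : Type w} {A : Set M} (n : ℕ) {m : ℕ} (a : Fin m → ↥A) :
    Fin m ⊕ Fin n → ↥A ⊕ Fin n :=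
  Sum.elim (fun i => Sum.inl (a i)) Sum.inr

theorem mem_restrTp {M : Type w} [L.Structure M] {A : Set M} {n m : ℕ}
    {p : Set (L.Formula (↥A ⊕ Fin n))} {a : Fin m → ↥A} {ψ : L.Formula (Fin m ⊕ Fin n)} :
    ψ ∈ restrTp A p a ↔ ψ.relabel (ea n a) ∈ p :=
  Iff.rfl

theorem formula_relabel_not {α β : Type*} (g : α → β) (φ : L.Formula α) :
    (φ.not).relabel g = (φ.relabel g).not :=
  BoundedFormula.relabel_not _ _

theorem onTerm_relabel {L' : FirstOrder.Language.{u, v}} (Φ : L →ᴸ L') {α β' : Type*}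
    (g : α → β') (t : L.Term α) :
    Φ.onTerm (t.relabel g) = (Φ.onTerm t).relabel g := by
  induction t with
  | var => rfl
  | func f ts ih => simp only [Term.relabel, LHom.onTerm, ih]

theorem onBoundedFormula_relabel {L' : FirstOrder.Language.{u, v}} (Φ : L →ᴸ L')
    {α β' : Type*} {k : ℕ} (g : α → β' ⊕ (Fin k)) :
    ∀ {l : ℕ} (ψ : L.BoundedFormula α l),
      Φ.onBoundedFormula (ψ.relabel g) = (Φ.onBoundedFormula ψ).relabel g := by
  intro l ψ
  induction ψ with
  | falsum => rfl
  | equal t₁ t₂ =>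
    simp only [BoundedFormula.relabel, BoundedFormula.mapTermRel, LHom.onBoundedFormula,
      onTerm_relabel, Term.bdEqual]
  | rel R ts =>
    simp only [BoundedFormula.relabel, BoundedFormula.mapTermRel, LHom.onBoundedFormula,
      Relations.boundedFormula, Function.comp_def, onTerm_relabel]
    rfl
  | imp φ₁ φ₂ ih1 ih2 =>
    rw [BoundedFormula.relabel_imp]
    exact congrArg₂ BoundedFormula.imp ih1 ih2
  | all φ ih =>
    have h2 : Φ.onBoundedFormula ((φ.relabel g).all) = (Φ.onBoundedFormula (φ.relabel g)).all :=
      rfl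
    have h3 : Φ.onBoundedFormula φ.all = (Φ.onBoundedFormula φ).all := rfl
    rw [BoundedFormula.relabel_all, h2, h3, BoundedFormula.relabel_all, ih]

theorem Sublanguage.IsBForm.relabel {Sl : Sublanguage L} {α β' : Type*} {k l : ℕ}
    {φ : L.BoundedFormula α l} (h : Sl.IsBForm φ) (g : α → β' ⊕ (Fin k)) :
    Sl.IsBForm (φ.relabel g) := by
  obtain ⟨ψ, rfl⟩ := h
  exact ⟨ψ.relabel g, onBoundedFormula_relabel _ _ _⟩

theorem Sublanguage.IsBForm.relabelF {Sl : Sublanguage L} {α β' : Type*}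
    {φ : L.Formula α} (h : Sl.IsBForm φ) (g : α → β') :
    Sl.IsBForm (φ.relabel g) :=
  h.relabel _

theorem Sublanguage.IsBForm.not' {Sl : Sublanguage L} {α : Type*} {l : ℕ}
    {φ : L.BoundedFormula α l} (h : Sl.IsBForm φ) : Sl.IsBForm φ.not := by
  obtain ⟨ψ, rfl⟩ := h
  exact ⟨ψ.not, rfl⟩

theorem realize_relabel_ea {M : Type w} [L.Structure M] {A : Set M} {n m : ℕ}
    (ψ : L.Formula (Fin m ⊕ Fin n)) (a : Fin m → ↥A) (b : Fin n → M) :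
    (ψ.relabel (ea n a)).Realize (paramAssign A b) ↔
      ψ.Realize (Sum.elim (fun i => ((a i : M))) b) := by
  rw [Formula.realize_relabel]
  have : paramAssign A b ∘ ea n a = Sum.elim (fun i => ((a i : M))) b := by
    funext x; cases x <;> rfl
  rw [this]

theorem models_realize {M : Type (max u v)} [L.Structure M] (hM : M ⊨ T) (hne : Nonempty M)
    {γ : Type} {φ : L.Formula γ} (h : T ⊨ᵇ φ) (v : γ → M) : φ.Realize v := by
  haveI := hM
  exact h (Theory.ModelType.of T M) v default

theorem IsTypeOver.not_mem_iff' {M : Type w} [L.Structure M] {A : Set M} {n : ℕ}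
    {p : Set (L.Formula (↥A ⊕ Fin n))} (hp : IsTypeOver A n p)
    {φ : L.Formula (↥A ⊕ Fin n)} : φ.not ∈ p ↔ φ ∉ p := by
  classical
  constructor
  · intro h1 h2
    obtain ⟨b, hb⟩ := hp.2 {φ, φ.not} (by
      intro x hx
      simp only [Finset.coe_insert, Finset.coe_singleton, Set.mem_insert_iff,
        Set.mem_singleton_iff] at hx
      rcases hx with rfl | rfl
      exacts [h2, h1])
    have hbφ := hb φ (by simp)
    have hbn := hb φ.not (by simp)
    rw [Formula.realize_not] at hbn
    exact hbn hbφ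
  · intro h2
    rcases hp.1 φ with h | h
    · exact absurd h h2
    · exact h

theorem IsTypeOver.mem_closure {M : Type w} [L.Structure M] {A : Set M} {n : ℕ}
    {p : Set (L.Formula (↥A ⊕ Fin n))} (hp : IsTypeOver A n p)
    {φ ψ : L.Formula (↥A ⊕ Fin n)} (hφ : φ ∈ p)
    (h : ∀ b : Fin n → M, φ.Realize (paramAssign A b) → ψ.Realize (paramAssign A b)) :
    ψ ∈ p := by
  classical
  by_contra h2
  have hn : ψ.not ∈ p := hp.not_mem_iff'.2 h2
  obtain ⟨b, hb⟩ := hp.2 {φ, ψ.not} (by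
    intro x hx
    simp only [Finset.coe_insert, Finset.coe_singleton, Set.mem_insert_iff,
      Set.mem_singleton_iff] at hx
    rcases hx with rfl | rfl
    exacts [hφ, hn])
  have h1 := hb φ (by simp)
  have h2' := hb ψ.not (by simp)
  rw [Formula.realize_not] at h2'
  exact h2' (h b h1)

theorem IsTypeOver.mem_of_models {M : Type (max u v)} [L.Structure M] (hM : M ⊨ T)
    (hne : Nonempty M) {A : Set M} {n : ℕ} {p : Set (L.Formula (↥A ⊕ Fin n))}
    (hp : IsTypeOver A n p) {m : ℕ} {a : Fin m → ↥A} {φ ψ : L.Formula (Fin m ⊕ Fin n)}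
    (hφ : φ.relabel (ea n a) ∈ p) (h : T ⊨ᵇ φ.imp ψ) : ψ.relabel (ea n a) ∈ p := by
  refine hp.mem_closure hφ fun b hb => ?_
  rw [realize_relabel_ea] at hb ⊢
  have h' := models_realize T hM hne h (Sum.elim (fun i => ((a i : M))) b)
  rw [Formula.realize_imp] at h'
  exact h' hb

theorem isolator_decides {M : Type w} [L.Structure M] {A : Set M} {n : ℕ}
    {p : Set (L.Formula (↥A ⊕ Fin n))} (hp : IsTypeOver A n p) {m : ℕ} {a : Fin m → ↥A}
    {φ : L.Formula (Fin m ⊕ Fin n)} (hiso : IsolatesSet T φ (restrTp A p a))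
    (ψ : L.Formula (Fin m ⊕ Fin n)) : T ⊨ᵇ φ.imp ψ ∨ T ⊨ᵇ φ.imp ψ.not := by
  by_cases hψ : ψ ∈ restrTp A p a
  · exact Or.inl (hiso.2 ψ hψ)
  · refine Or.inr (hiso.2 ψ.not ?_)
    show (ψ.not).relabel (ea n a) ∈ p
    rw [formula_relabel_not]
    exact hp.not_mem_iff'.2 hψ

theorem exists_fin_repr {M : Type w} [L.Structure M] {A : Set M} {n : ℕ}
    (ψ : L.Formula (↥A ⊕ Fin n)) :
    ∃ (m : ℕ) (a : Fin m → ↥A) (χ : L.Formula (Fin m ⊕ Fin n)),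
      ∀ v : ↥A ⊕ Fin n → M, ψ.Realize v ↔ (χ.relabel (ea n a)).Realize v := by
  classical
  have hfin : (Sum.inl ⁻¹' (↑ψ.freeVarFinset : Set (↥A ⊕ Fin n)) : Set ↥A).Finite :=
    Set.Finite.preimage (Sum.inl_injective.injOn) ψ.freeVarFinset.finite_toSet
  haveI := hfin.fintype
  let e := Fintype.equivFin ↥(Sum.inl ⁻¹' (↑ψ.freeVarFinset : Set (↥A ⊕ Fin n)) : Set ↥A)
  let m := Fintype.card ↥(Sum.inl ⁻¹' (↑ψ.freeVarFinset : Set (↥A ⊕ Fin n)) : Set ↥A)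
  let a : Fin m → ↥A := fun i => (e.symm i).1
  let g : {x : ↥A ⊕ Fin n // x ∈ ψ.freeVarFinset} → Fin m ⊕ Fin n := fun x =>
    match x with
    | ⟨Sum.inl y, hy⟩ => Sum.inl (e ⟨y, Finset.mem_coe.mpr hy⟩)
    | ⟨Sum.inr j, _⟩ => Sum.inr j
  refine ⟨m, a, Formula.relabel g (ψ.restrictFreeVar id), fun v => ?_⟩
  have hL : ψ.Realize v ↔
      Formula.Realize (M := M) (ψ.restrictFreeVar id) (v ∘ Subtype.val) := by
    have h2 := BoundedFormula.realize_restrictFreeVar' (φ := ψ)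
      (Set.Subset.rfl : (↑ψ.freeVarFinset : Set (↥A ⊕ Fin n)) ⊆ ↑ψ.freeVarFinset)
      (v := v) (xs := default)
    rw [Set.inclusion_eq_id] at h2
    exact h2.symm
  have hR : Formula.Realize (M := M)
        (Formula.relabel (ea n a) (Formula.relabel g (ψ.restrictFreeVar id))) v ↔
      Formula.Realize (M := M) (ψ.restrictFreeVar id) ((v ∘ ea n a) ∘ g) := by
    rw [Formula.realize_relabel, Formula.realize_relabel]
  have hkey : (v ∘ ea n a) ∘ g = v ∘ Subtype.val := by
    funext x
    obtain ⟨x, hx⟩ := x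
    cases x with
    | inl y =>
      show v (ea n a (Sum.inl (e ⟨y, Finset.mem_coe.mpr hx⟩))) = v (Sum.inl y)
      show v (Sum.inl ((e.symm (e ⟨y, Finset.mem_coe.mpr hx⟩)).1)) = v (Sum.inl y)
      rw [Equiv.symm_apply_apply]
    | inr j => rfl
  rw [hkey] at hR
  exact hL.trans hR.symm

theorem countable_isBForm {Sl : Sublanguage L} (hSl : Sl.Countable') {α : Type*} [Countable α]
    (k : ℕ) : Countable {φ : L.BoundedFormula α k // Sl.IsBForm φ} := by
  haveI h1 : ∀ l, Countable (Sl.lang.Functions l) := fun l => (hSl.1 l).to_subtype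
  haveI h2 : ∀ l, Countable (Sl.lang.Relations l) := fun l => (hSl.2 l).to_subtype
  haveI hsym : Countable (Sl.lang).Symbols := by
    unfold Language.Symbols
    infer_instance
  have hcard : #(Σ k', Sl.lang.BoundedFormula α k') ≤ ℵ₀ := by
    refine (BoundedFormula.card_le).trans (max_le le_rfl ?_)
    rw [add_le_aleph0]
    constructor
    · rw [lift_le_aleph0]
      exact Cardinal.mk_le_aleph0
    · rw [lift_le_aleph0]
      exact Cardinal.mk_le_aleph0
  haveI : Countable (Σ k', Sl.lang.BoundedFormula α k') := mk_le_aleph0_iff.1 hcard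
  haveI : Countable (Sl.lang.BoundedFormula α k) :=
    (sigma_mk_injective (i := k)).countable
  have hch : ∀ φ : {φ : L.BoundedFormula α k // Sl.IsBForm φ},
      ∃ ψ : Sl.lang.BoundedFormula α k, Sl.hom.onBoundedFormula ψ = φ.1 := fun φ => φ.2
  choose F hF using hch
  have hinj : Function.Injective F := fun x y h => Subtype.ext (by rw [← hF x, ← hF y, h])
  exact hinj.countable

theorem isAtomicType_of_isAtomicTypeIn {M : Type w} [L.Structure M] {Sl : Sublanguage L}
    {A : Set M} {n : ℕ} {p : Set (L.Formula (↥A ⊕ Fin n))} (h : IsAtomicTypeIn T Sl A p) :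
    IsAtomicType T A p :=
  ⟨h.1, fun m a => let ⟨φ, _, hi⟩ := h.2 m a; ⟨φ, hi⟩⟩

theorem continuous_of_discrete_rng' {X Y : Type*} [TopologicalSpace X] [TopologicalSpace Y]
    [DiscreteTopology Y] {f : X → Y} (h : ∀ y, IsOpen (f ⁻¹' {y})) : Continuous f :=
  ⟨fun s _ => by
    have hs : f ⁻¹' s = ⋃ y ∈ s, f ⁻¹' {y} := by ext x; simp
    rw [hs]
    exact isOpen_biUnion fun y _ => h y⟩

theorem isOpen_basic {M : Type w} [L.Structure M] {A : Set M} {n : ℕ}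
    (ψ : L.Formula (↥A ⊕ Fin n)) : IsOpen {p : ↥(SnAt T A n) | ψ ∈ p.1} :=
  TopologicalSpace.GenerateOpen.basic _ ⟨ψ, rfl⟩

theorem isClosed_snAtIn {N : Type (max u v)} [L.Structure N] (hM : N ⊨ T) (hne : Nonempty N)
    {A : Set N} {n : ℕ} (Sl : Sublanguage L) :
    IsClosed {p : ↥(SnAt T A n) | p.1 ∈ SnAtIn T Sl A n} := by
  rw [← isOpen_compl_iff, isOpen_iff_forall_mem_open]
  rintro ⟨p, hpS⟩ hpc
  simp only [Set.mem_compl_iff, Set.mem_setOf_eq] at hpc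
  have hpt : IsTypeOver A n p := hpS.1
  have hna : ¬ ∀ (m : ℕ) (a : Fin m → ↥A), ∃ χ : L.Formula (Fin m ⊕ Fin n),
      Sl.IsBForm χ ∧ IsolatesSet T χ (restrTp A p a) := fun h => hpc ⟨hpt, h⟩
  push_neg at hna
  obtain ⟨m, a, hna⟩ := hna
  obtain ⟨φ, hiso⟩ := hpS.2 m a
  refine ⟨{q : ↥(SnAt T A n) | Formula.relabel (ea n a) φ ∈ q.1}, ?_, isOpen_basic T _,
    hiso.1⟩
  intro q hq
  simp only [Set.mem_setOf_eq] at hq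
  intro hqIn
  obtain ⟨χ, hBF, hisoq⟩ := (hqIn : IsAtomicTypeIn T Sl A q.1).2 m a
  apply hna χ hBF
  have hqt : IsTypeOver A n q.1 := q.2.1
  have heq : restrTp A q.1 a = restrTp A p a := by
    ext ψ
    constructor
    · intro hψ
      by_contra hψp
      have h1 : ψ.not ∈ restrTp A p a := by
        rw [mem_restrTp, formula_relabel_not]
        exact hpt.not_mem_iff'.2 hψp
      have h2 : T ⊨ᵇ φ.imp ψ.not := hiso.2 _ h1
      have h3 : Formula.relabel (ea n a) ψ.not ∈ q.1 := hqt.mem_of_models T hM hne hq h2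
      rw [formula_relabel_not] at h3
      exact (hqt.not_mem_iff'.1 h3) hψ
    · intro hψ
      exact hqt.mem_of_models T hM hne hq (hiso.2 ψ hψ)
  rw [heq] at hisoq
  exact hisoq

theorem subsingleton_snAt_of_isEmpty {M : Type w} [L.Structure M] {A : Set M} {n : ℕ}
    (hMe : IsEmpty M) : Subsingleton ↥(SnAt T A n) := by
  constructor
  rintro ⟨p, hp⟩ ⟨q, hq⟩
  cases n with
  | succ k =>
    obtain ⟨b, -⟩ := hp.1.2 ∅ (by simp)
    exact (hMe.false (b 0)).elim
  | zero =>
    have key : ∀ r : Set (L.Formula (↥A ⊕ Fin 0)), IsTypeOver A 0 r → ∀ ψ,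
        (ψ ∈ r ↔ ψ.Realize (paramAssign A fun i => i.elim0)) := by
      intro r hr ψ
      constructor
      · intro h
        classical
        obtain ⟨b, hb⟩ := hr.2 {ψ} (by simpa using h)
        have hψ := hb ψ (by simp)
        have hbe : b = fun i => i.elim0 := funext fun i => i.elim0
        rwa [hbe] at hψ
      · intro h
        rcases hr.1 ψ with h1 | h1
        · exact h1
        · exfalso
          classical
          obtain ⟨b, hb⟩ := hr.2 {ψ.not} (by simpa using h1)
          have hψ := hb ψ.not (by simp)
          rw [Formula.realize_not] at hψ
          have hbe : b = fun i => i.elim0 := funext fun i => i.elim0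
          rw [hbe] at hψ
          exact hψ h
    refine Subtype.ext (Set.ext fun ψ => ?_)
    rw [key p hp.1 ψ, key q hq.1 ψ]

theorem isClosed_of_subsingleton' {X : Type*} [TopologicalSpace X] [Subsingleton X]
    (S : Set X) : IsClosed S := by
  rcases S.eq_empty_or_nonempty with rfl | ⟨x, hx⟩
  · exact isClosed_empty
  · have hS : S = Set.univ := Set.eq_univ_of_forall fun y => (Subsingleton.elim x y) ▸ hx
    rw [hS]; exact isClosed_univ

theorem discreteTopology_of_subsingleton' {X : Type*} [TopologicalSpace X] [Subsingleton X] :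
    DiscreteTopology X := by
  rw [discreteTopology_iff_forall_isOpen]
  intro S
  rcases S.eq_empty_or_nonempty with rfl | ⟨x, hx⟩
  · exact isOpen_empty
  · have hS : S = Set.univ := Set.eq_univ_of_forall fun y => (Subsingleton.elim x y) ▸ hx
    rw [hS]; exact isOpen_univ

open Topology in
theorem polishSpace_snAtIn {N : Type (max u v)} [L.Structure N] (hM : N ⊨ T) (hne : Nonempty N)
    {A : Set N} (hA : A.Countable) {n : ℕ} {Sl : Sublanguage L} (hSl : Sl.Countable') :
    PolishSpace {p : ↥(SnAt T A n) // p.1 ∈ SnAtIn T Sl A n} := by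
  classical
  haveI : Countable ↥A := hA.to_subtype
  haveI hctF : Countable {φ : L.Formula (↥A ⊕ Fin n) // Sl.IsBForm φ} :=
    countable_isBForm hSl 0
  have hctP : ∀ m : ℕ, Countable {χ : L.Formula (Fin m ⊕ Fin n) // Sl.IsBForm χ} :=
    fun m => countable_isBForm hSl 0
  have henc : ∀ m : ℕ, ∃ f : {χ : L.Formula (Fin m ⊕ Fin n) // Sl.IsBForm χ} → ℕ,
      Function.Injective f := fun m => by
    haveI := hctP m
    exact Countable.exists_injective_nat _
  choose enc hencinj using henc
  -- plugging parameters into an `Sl`-formula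
  let bplug : ∀ (m : ℕ) (a : Fin m → ↥A), {χ : L.Formula (Fin m ⊕ Fin n) // Sl.IsBForm χ} →
      {φ : L.Formula (↥A ⊕ Fin n) // Sl.IsBForm φ} :=
    fun m a χ => ⟨Formula.relabel (ea n a) χ.1, χ.2.relabelF _⟩
  -- the goodness predicate
  let Good : (Σ m : ℕ, (Fin m → ↥A)) → ℕ →
      ({φ : L.Formula (↥A ⊕ Fin n) // Sl.IsBForm φ} → Bool) → Prop := fun i k f =>
    ∃ χ : {χ : L.Formula (Fin i.1 ⊕ Fin n) // Sl.IsBForm χ}, enc i.1 χ = k ∧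
      (∀ ψ : L.Formula (Fin i.1 ⊕ Fin n), (T ⊨ᵇ χ.1.imp ψ) ∨ (T ⊨ᵇ χ.1.imp ψ.not)) ∧
      f (bplug i.1 i.2 χ) = true
  have goodClopen : ∀ (Y : Type (max u v)) [TopologicalSpace Y]
      (F : Y → ({φ : L.Formula (↥A ⊕ Fin n) // Sl.IsBForm φ} → Bool)),
      (∀ φ, IsClopen {x : Y | F x φ = true}) → ∀ (i : Σ m : ℕ, (Fin m → ↥A)) (k : ℕ),
      IsClopen {x : Y | Good i k (F x)} := by
    intro Y _ F hF i k
    by_cases hex : ∃ χ : {χ : L.Formula (Fin i.1 ⊕ Fin n) // Sl.IsBForm χ},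
        enc i.1 χ = k ∧ ∀ ψ : L.Formula (Fin i.1 ⊕ Fin n),
          (T ⊨ᵇ χ.1.imp ψ) ∨ (T ⊨ᵇ χ.1.imp ψ.not)
    · obtain ⟨χ₀, hk, hd⟩ := hex
      have hset : {x : Y | Good i k (F x)} = {x : Y | F x (bplug i.1 i.2 χ₀) = true} := by
        ext x
        constructor
        · rintro ⟨χ, h1, h2, h3⟩
          have hχ : χ = χ₀ := hencinj i.1 (by rw [h1, hk])
          rwa [hχ] at h3
        · intro h
          exact ⟨χ₀, hk, hd, h⟩
      rw [hset]; exact hF _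
    · have hset : {x : Y | Good i k (F x)} = ∅ := by
        ext x
        simp only [Set.mem_setOf_eq, Set.mem_empty_iff_false, iff_false]
        rintro ⟨χ, h1, h2, h3⟩
        exact hex ⟨χ, h1, h2⟩
      rw [hset]; exact isClopen_empty
  -- coordinate clopen sets in the product space
  have hCoordF : ∀ φ : {φ : L.Formula (↥A ⊕ Fin n) // Sl.IsBForm φ},
      IsClopen {x : ({φ : L.Formula (↥A ⊕ Fin n) // Sl.IsBForm φ} → Bool) ×
        ((Σ m : ℕ, (Fin m → ↥A)) → ℕ) | x.1 φ = true} := by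
    intro φ
    have hc : Continuous fun x : ({φ : L.Formula (↥A ⊕ Fin n) // Sl.IsBForm φ} → Bool) ×
        ((Σ m : ℕ, (Fin m → ↥A)) → ℕ) => x.1 φ :=
      (continuous_apply φ).comp continuous_fst
    exact ⟨(isClosed_discrete {true}).preimage hc, (isOpen_discrete {true}).preimage hc⟩
  have hCoordI : ∀ (i : Σ m : ℕ, (Fin m → ↥A)) (k : ℕ),
      IsClopen {x : ({φ : L.Formula (↥A ⊕ Fin n) // Sl.IsBForm φ} → Bool) ×
        ((Σ m : ℕ, (Fin m → ↥A)) → ℕ) | x.2 i = k} := by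
    intro i k
    have hc : Continuous fun x : ({φ : L.Formula (↥A ⊕ Fin n) // Sl.IsBForm φ} → Bool) ×
        ((Σ m : ℕ, (Fin m → ↥A)) → ℕ) => x.2 i :=
      (continuous_apply i).comp continuous_snd
    exact ⟨(isClosed_discrete {k}).preimage hc, (isOpen_discrete {k}).preimage hc⟩
  -- the target closed set
  let H : Set (({φ : L.Formula (↥A ⊕ Fin n) // Sl.IsBForm φ} → Bool) ×
      ((Σ m : ℕ, (Fin m → ↥A)) → ℕ)) :=
    {x | (∀ φ : {φ : L.Formula (↥A ⊕ Fin n) // Sl.IsBForm φ},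
            x.1 φ = true ∨ x.1 ⟨φ.1.not, φ.2.not'⟩ = true) ∧
         (∀ s : Finset {φ : L.Formula (↥A ⊕ Fin n) // Sl.IsBForm φ},
            (∀ φ ∈ s, x.1 φ = true) →
              ∃ b : Fin n → N, ∀ φ ∈ s, φ.1.Realize (paramAssign A b)) ∧
         (∀ i : Σ m : ℕ, (Fin m → ↥A), Good i (x.2 i) x.1 ∧ ∀ k < x.2 i, ¬ Good i k x.1)}
  have hH1 : IsClosed {x : ({φ : L.Formula (↥A ⊕ Fin n) // Sl.IsBForm φ} → Bool) ×
      ((Σ m : ℕ, (Fin m → ↥A)) → ℕ) | ∀ φ : {φ : L.Formula (↥A ⊕ Fin n) // Sl.IsBForm φ},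
        x.1 φ = true ∨ x.1 ⟨φ.1.not, φ.2.not'⟩ = true} := by
    have hset : {x : ({φ : L.Formula (↥A ⊕ Fin n) // Sl.IsBForm φ} → Bool) ×
        ((Σ m : ℕ, (Fin m → ↥A)) → ℕ) | ∀ φ : {φ : L.Formula (↥A ⊕ Fin n) // Sl.IsBForm φ},
          x.1 φ = true ∨ x.1 ⟨φ.1.not, φ.2.not'⟩ = true} =
        ⋂ φ : {φ : L.Formula (↥A ⊕ Fin n) // Sl.IsBForm φ},
          ({x | x.1 φ = true} ∪ {x | x.1 ⟨φ.1.not, φ.2.not'⟩ = true}) := by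
      ext x
      simp only [Set.mem_setOf_eq, Set.mem_iInter, Set.mem_union]
    rw [hset]
    exact isClosed_iInter fun φ => ((hCoordF φ).union (hCoordF _)).1
  have hH2 : IsClosed {x : ({φ : L.Formula (↥A ⊕ Fin n) // Sl.IsBForm φ} → Bool) ×
      ((Σ m : ℕ, (Fin m → ↥A)) → ℕ) |
        ∀ s : Finset {φ : L.Formula (↥A ⊕ Fin n) // Sl.IsBForm φ},
          (∀ φ ∈ s, x.1 φ = true) →
            ∃ b : Fin n → N, ∀ φ ∈ s, φ.1.Realize (paramAssign A b)} := by
    have hset : {x : ({φ : L.Formula (↥A ⊕ Fin n) // Sl.IsBForm φ} → Bool) ×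
        ((Σ m : ℕ, (Fin m → ↥A)) → ℕ) |
          ∀ s : Finset {φ : L.Formula (↥A ⊕ Fin n) // Sl.IsBForm φ},
            (∀ φ ∈ s, x.1 φ = true) →
              ∃ b : Fin n → N, ∀ φ ∈ s, φ.1.Realize (paramAssign A b)} =
        ⋂ s : Finset {φ : L.Formula (↥A ⊕ Fin n) // Sl.IsBForm φ},
          {x | (∀ φ ∈ s, x.1 φ = true) →
            ∃ b : Fin n → N, ∀ φ ∈ s, φ.1.Realize (paramAssign A b)} := by
      ext x
      simp only [Set.mem_setOf_eq, Set.mem_iInter]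
    rw [hset]
    refine isClosed_iInter fun s => ?_
    by_cases hb : ∃ b : Fin n → N, ∀ φ ∈ s, φ.1.Realize (paramAssign A b)
    · have hset2 : {x : ({φ : L.Formula (↥A ⊕ Fin n) // Sl.IsBForm φ} → Bool) ×
          ((Σ m : ℕ, (Fin m → ↥A)) → ℕ) | (∀ φ ∈ s, x.1 φ = true) →
            ∃ b : Fin n → N, ∀ φ ∈ s, φ.1.Realize (paramAssign A b)} = Set.univ :=
        Set.eq_univ_of_forall fun x _ => hb
      rw [hset2]; exact isClosed_univ
    · have hset2 : {x : ({φ : L.Formula (↥A ⊕ Fin n) // Sl.IsBForm φ} → Bool) ×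
          ((Σ m : ℕ, (Fin m → ↥A)) → ℕ) | (∀ φ ∈ s, x.1 φ = true) →
            ∃ b : Fin n → N, ∀ φ ∈ s, φ.1.Realize (paramAssign A b)} =
          ({x | ∀ φ ∈ s, x.1 φ = true} : Set _)ᶜ := by
        ext x
        simp only [Set.mem_setOf_eq, Set.mem_compl_iff]
        exact ⟨fun h h2 => hb (h h2), fun h h2 => absurd h2 h⟩
      rw [hset2]
      rw [isClosed_compl_iff]
      have hset3 : {x : ({φ : L.Formula (↥A ⊕ Fin n) // Sl.IsBForm φ} → Bool) ×
          ((Σ m : ℕ, (Fin m → ↥A)) → ℕ) | ∀ φ ∈ s, x.1 φ = true} =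
          ⋂ φ ∈ s, {x | x.1 φ = true} := by
        ext x
        simp only [Set.mem_setOf_eq, Set.mem_iInter]
      rw [hset3]
      exact isOpen_biInter_finset fun φ _ => (hCoordF φ).2
  have hH3 : IsClosed {x : ({φ : L.Formula (↥A ⊕ Fin n) // Sl.IsBForm φ} → Bool) ×
      ((Σ m : ℕ, (Fin m → ↥A)) → ℕ) |
        ∀ i : Σ m : ℕ, (Fin m → ↥A), Good i (x.2 i) x.1 ∧ ∀ k < x.2 i, ¬ Good i k x.1} := by
    have hset : {x : ({φ : L.Formula (↥A ⊕ Fin n) // Sl.IsBForm φ} → Bool) ×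
        ((Σ m : ℕ, (Fin m → ↥A)) → ℕ) |
          ∀ i : Σ m : ℕ, (Fin m → ↥A), Good i (x.2 i) x.1 ∧ ∀ k < x.2 i, ¬ Good i k x.1} =
        ⋂ i : Σ m : ℕ, (Fin m → ↥A),
          {x | Good i (x.2 i) x.1 ∧ ∀ k < x.2 i, ¬ Good i k x.1} := by
      ext x
      simp only [Set.mem_setOf_eq, Set.mem_iInter]
    rw [hset]
    refine isClosed_iInter fun i => ?_
    have hGoodX : ∀ k, IsClopen {x : ({φ : L.Formula (↥A ⊕ Fin n) // Sl.IsBForm φ} → Bool) ×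
        ((Σ m : ℕ, (Fin m → ↥A)) → ℕ) | Good i k x.1} :=
      fun k => goodClopen _ (fun x : ({φ : L.Formula (↥A ⊕ Fin n) // Sl.IsBForm φ} → Bool) ×
          ((Σ m : ℕ, (Fin m → ↥A)) → ℕ) => x.1) hCoordF i k
    have hB : ∀ k, IsClopen {x : ({φ : L.Formula (↥A ⊕ Fin n) // Sl.IsBForm φ} → Bool) ×
        ((Σ m : ℕ, (Fin m → ↥A)) → ℕ) | Good i k x.1 ∧ ∀ j < k, ¬ Good i j x.1} := by
      intro k
      have hset2 : {x : ({φ : L.Formula (↥A ⊕ Fin n) // Sl.IsBForm φ} → Bool) ×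
          ((Σ m : ℕ, (Fin m → ↥A)) → ℕ) | Good i k x.1 ∧ ∀ j < k, ¬ Good i j x.1} =
          {x | Good i k x.1} ∩ ⋂ j ∈ Finset.range k, ({x | Good i j x.1} : Set _)ᶜ := by
        ext x
        simp only [Set.mem_setOf_eq, Set.mem_inter_iff, Set.mem_iInter, Set.mem_compl_iff,
          Finset.mem_range]
      rw [hset2]
      exact (hGoodX k).inter ⟨isClosed_biInter fun j _ => (hGoodX j).compl.1,
        isOpen_biInter_finset fun j _ => (hGoodX j).compl.2⟩
    rw [← isOpen_compl_iff]
    have hset3 : {x : ({φ : L.Formula (↥A ⊕ Fin n) // Sl.IsBForm φ} → Bool) ×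
        ((Σ m : ℕ, (Fin m → ↥A)) → ℕ) | Good i (x.2 i) x.1 ∧ ∀ k < x.2 i, ¬ Good i k x.1}ᶜ =
        ⋃ k : ℕ, ({x | x.2 i = k} ∩
          ({x | Good i k x.1 ∧ ∀ j < k, ¬ Good i j x.1} : Set _)ᶜ) := by
      ext x
      simp only [Set.mem_compl_iff, Set.mem_setOf_eq, Set.mem_iUnion, Set.mem_inter_iff]
      constructor
      · intro h
        exact ⟨x.2 i, rfl, h⟩
      · rintro ⟨k, hk, h2⟩
        intro hcon
        apply h2
        rw [hk] at hcon
        exact hcon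
    rw [hset3]
    exact isOpen_iUnion fun k => (hCoordI i k).2.inter (hB k).compl.2
  have hHclosed : IsClosed H := by
    have : H = {x : ({φ : L.Formula (↥A ⊕ Fin n) // Sl.IsBForm φ} → Bool) ×
        ((Σ m : ℕ, (Fin m → ↥A)) → ℕ) | ∀ φ : {φ : L.Formula (↥A ⊕ Fin n) // Sl.IsBForm φ},
          x.1 φ = true ∨ x.1 ⟨φ.1.not, φ.2.not'⟩ = true} ∩
        ({x | ∀ s : Finset {φ : L.Formula (↥A ⊕ Fin n) // Sl.IsBForm φ},
          (∀ φ ∈ s, x.1 φ = true) →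
            ∃ b : Fin n → N, ∀ φ ∈ s, φ.1.Realize (paramAssign A b)} ∩
         {x | ∀ i : Σ m : ℕ, (Fin m → ↥A),
            Good i (x.2 i) x.1 ∧ ∀ k < x.2 i, ¬ Good i k x.1}) := by
      ext x
      simp only [Set.mem_setOf_eq, Set.mem_inter_iff, H]
    rw [this]
    exact hH1.inter (hH2.inter hH3)
  -- the evaluation map
  let e : {p : ↥(SnAt T A n) // p.1 ∈ SnAtIn T Sl A n} →
      ({φ : L.Formula (↥A ⊕ Fin n) // Sl.IsBForm φ} → Bool) :=
    fun q φ => decide (φ.1 ∈ q.1.1)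
  have he : ∀ (q : {p : ↥(SnAt T A n) // p.1 ∈ SnAtIn T Sl A n})
      (φ : {φ : L.Formula (↥A ⊕ Fin n) // Sl.IsBForm φ}), e q φ = true ↔ φ.1 ∈ q.1.1 :=
    fun q φ => by simp [e]
  have hqt : ∀ q : {p : ↥(SnAt T A n) // p.1 ∈ SnAtIn T Sl A n}, IsTypeOver A n q.1.1 :=
    fun q => q.2.1
  have hne_good : ∀ (q : {p : ↥(SnAt T A n) // p.1 ∈ SnAtIn T Sl A n})
      (i : Σ m : ℕ, (Fin m → ↥A)), ∃ k, Good i k (e q) := by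
    intro q i
    obtain ⟨χ, hBF, hiso⟩ := q.2.2 i.1 i.2
    refine ⟨enc i.1 ⟨χ, hBF⟩, ⟨χ, hBF⟩, rfl, ?_, ?_⟩
    · exact isolator_decides T (hqt q) hiso
    · exact (he q _).2 hiso.1
  let σ : {p : ↥(SnAt T A n) // p.1 ∈ SnAtIn T Sl A n} → (Σ m : ℕ, (Fin m → ↥A)) → ℕ :=
    fun q i => sInf {k | Good i k (e q)}
  have hσ1 : ∀ q i, Good i (σ q i) (e q) := fun q i => Nat.sInf_mem (hne_good q i)
  have hσ2 : ∀ q i k, k < σ q i → ¬ Good i k (e q) := fun q i k hk =>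
    Nat.notMem_of_lt_sInf hk
  let Ψ : {p : ↥(SnAt T A n) // p.1 ∈ SnAtIn T Sl A n} →
      ({φ : L.Formula (↥A ⊕ Fin n) // Sl.IsBForm φ} → Bool) ×
        ((Σ m : ℕ, (Fin m → ↥A)) → ℕ) := fun q => (e q, σ q)
  -- range is contained in H
  have hrange_sub : ∀ q, Ψ q ∈ H := by
    intro q
    refine ⟨?_, ?_, ?_⟩
    · intro φ
      rcases (hqt q).1 φ.1 with h | h
      · exact Or.inl ((he q φ).2 h)
      · exact Or.inr ((he q _).2 h)
    · intro s hs
      have hsub : ↑(s.image Subtype.val) ⊆ q.1.1 := by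
        intro x hx
        simp only [Finset.coe_image, Set.mem_image, Finset.mem_coe] at hx
        obtain ⟨φ, hφ, rfl⟩ := hx
        exact (he q φ).1 (hs φ hφ)
      obtain ⟨b, hb⟩ := (hqt q).2 (s.image Subtype.val) hsub
      exact ⟨b, fun φ hφ => hb φ.1 (Finset.mem_image_of_mem _ hφ)⟩
    · intro i
      exact ⟨hσ1 q i, fun k hk => hσ2 q i k hk⟩
  -- every element of H is in the range
  have hrange_sup : ∀ x ∈ H, ∃ q, Ψ q = x := by
    rintro ⟨f, c⟩ ⟨hx1, hx2, hx3⟩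
    set p : Set (L.Formula (↥A ⊕ Fin n)) :=
      {ψ | ∃ s : Finset {φ : L.Formula (↥A ⊕ Fin n) // Sl.IsBForm φ},
        (∀ φ ∈ s, f φ = true) ∧ ∀ b : Fin n → N,
          (∀ φ ∈ s, φ.1.Realize (paramAssign A b)) → ψ.Realize (paramAssign A b)} with hpdef
    have hmem_of_f : ∀ φ : {φ : L.Formula (↥A ⊕ Fin n) // Sl.IsBForm φ},
        f φ = true → φ.1 ∈ p := by
      intro φ hφ
      refine ⟨{φ}, by simpa using hφ, fun b hb => ?_⟩
      simpa using hb φ (Finset.mem_singleton_self _)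
    have hfs : ∀ fs : Finset (L.Formula (↥A ⊕ Fin n)), ↑fs ⊆ p →
        ∃ b : Fin n → N, ∀ ψ ∈ fs, ψ.Realize (paramAssign A b) := by
      intro fs hfssub
      have hch : ∀ ψ : {ψ // ψ ∈ fs},
          ∃ s : Finset {φ : L.Formula (↥A ⊕ Fin n) // Sl.IsBForm φ},
            (∀ φ ∈ s, f φ = true) ∧ ∀ b : Fin n → N,
              (∀ φ ∈ s, φ.1.Realize (paramAssign A b)) → ψ.1.Realize (paramAssign A b) :=
        fun ψ => hfssub ψ.2
      choose g hg1 hg2 using hch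
      obtain ⟨b, hb⟩ := hx2 (fs.attach.biUnion g) (by
        intro φ hφ
        obtain ⟨ψ, -, hφ'⟩ := Finset.mem_biUnion.1 hφ
        exact hg1 ψ φ hφ')
      exact ⟨b, fun ψ hψ => hg2 ⟨ψ, hψ⟩ b fun φ hφ =>
        hb φ (Finset.mem_biUnion.2 ⟨⟨ψ, hψ⟩, Finset.mem_attach _ _, hφ⟩)⟩
    have hcmpl : ∀ ψ : L.Formula (↥A ⊕ Fin n), ψ ∈ p ∨ ψ.not ∈ p := by
      intro ψ
      obtain ⟨m, a, χ, hv⟩ := exists_fin_repr (M := N) ψ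
      obtain ⟨χ₀, hk, hd, hf0⟩ := (hx3 ⟨m, a⟩).1
      rcases hd χ with himp | himp
      · left
        refine ⟨{bplug m a χ₀}, by simpa using hf0, fun b hb => ?_⟩
        have h1 : (Formula.relabel (ea n a) χ₀.1).Realize (paramAssign A b) := by
          exact hb _ (Finset.mem_singleton_self _)
        rw [realize_relabel_ea] at h1
        have h2 := models_realize T hM hne himp (Sum.elim (fun i => ((a i : N))) b)
        rw [Formula.realize_imp] at h2
        rw [hv (paramAssign A b), realize_relabel_ea]
        exact h2 h1
      · right
        refine ⟨{bplug m a χ₀}, by simpa using hf0, fun b hb => ?_⟩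
        have h1 : (Formula.relabel (ea n a) χ₀.1).Realize (paramAssign A b) := by
          exact hb _ (Finset.mem_singleton_self _)
        rw [realize_relabel_ea] at h1
        have h2 := models_realize T hM hne himp (Sum.elim (fun i => ((a i : N))) b)
        rw [Formula.realize_imp] at h2
        rw [Formula.realize_not, hv (paramAssign A b), realize_relabel_ea]
        have h3 := h2 h1
        rw [Formula.realize_not] at h3
        exact h3
    have hpt : IsTypeOver A n p := ⟨hcmpl, hfs⟩
    have hef : ∀ φ : {φ : L.Formula (↥A ⊕ Fin n) // Sl.IsBForm φ},
        (φ.1 ∈ p ↔ f φ = true) := by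
      intro φ
      constructor
      · intro hφ
        by_contra hf
        rcases hx1 φ with h | h
        · exact hf h
        · exact (hpt.not_mem_iff'.1 (hmem_of_f _ h)) hφ
      · exact fun h => hmem_of_f _ h
    have hatom : ∀ (m : ℕ) (a : Fin m → ↥A), ∃ χ : L.Formula (Fin m ⊕ Fin n),
        Sl.IsBForm χ ∧ IsolatesSet T χ (restrTp A p a) := by
      intro m a
      obtain ⟨χ₀, hk, hd, hf0⟩ := (hx3 ⟨m, a⟩).1
      refine ⟨χ₀.1, χ₀.2, hmem_of_f _ hf0, ?_⟩
      intro ψ hψ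
      rcases hd ψ with h | h
      · exact h
      · exfalso
        have h0 : Formula.relabel (ea n a) χ₀.1 ∈ p := hmem_of_f _ hf0
        have h1 : Formula.relabel (ea n a) ψ.not ∈ p :=
          hpt.mem_of_models T hM hne h0 h
        rw [formula_relabel_not] at h1
        exact (hpt.not_mem_iff'.1 h1) hψ
    have hIn : IsAtomicTypeIn T Sl A p := ⟨hpt, hatom⟩
    have hAt : p ∈ SnAt T A n := isAtomicType_of_isAtomicTypeIn T hIn
    refine ⟨⟨⟨p, hAt⟩, hIn⟩, ?_⟩
    have hefe : e ⟨⟨p, hAt⟩, hIn⟩ = f := by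
      funext φ
      cases hfφ : f φ with
      | false =>
        have : φ.1 ∉ p := fun hmem => by
          have := (hef φ).1 hmem
          rw [hfφ] at this
          exact Bool.false_ne_true this
        exact decide_eq_false this
      | true => exact decide_eq_true ((hef φ).2 hfφ)
    have hσe : σ ⟨⟨p, hAt⟩, hIn⟩ = c := by
      funext i
      have h1 : Good i (c i) f := (hx3 i).1
      have h2 : ∀ k < c i, ¬ Good i k f := (hx3 i).2
      show sInf {k | Good i k (e ⟨⟨p, hAt⟩, hIn⟩)} = c i
      rw [hefe]
      have hmem : sInf {k | Good i k f} ∈ {k | Good i k f} := Nat.sInf_mem ⟨c i, h1⟩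
      exact le_antisymm (Nat.sInf_le h1) (not_lt.1 fun hlt => h2 _ hlt hmem)
    show (e ⟨⟨p, hAt⟩, hIn⟩, σ ⟨⟨p, hAt⟩, hIn⟩) = (f, c)
    rw [hefe, hσe]
  -- injectivity
  have hinj : Function.Injective Ψ := by
    have key : ∀ q q' : {p : ↥(SnAt T A n) // p.1 ∈ SnAtIn T Sl A n}, e q = e q' →
        ∀ ψ : L.Formula (↥A ⊕ Fin n), ψ ∈ q.1.1 → ψ ∈ q'.1.1 := by
      intro q q' hee ψ hψ
      obtain ⟨m, a, χ, hv⟩ := exists_fin_repr (M := N) ψ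
      obtain ⟨χ₀, hBF, hiso⟩ := q.2.2 m a
      have hχq : Formula.relabel (ea n a) χ ∈ q.1.1 :=
        (hqt q).mem_closure hψ fun b hb => (hv _).1 hb
      have himp : T ⊨ᵇ χ₀.imp χ := hiso.2 χ hχq
      have hχ₀q : Formula.relabel (ea n a) χ₀ ∈ q.1.1 := hiso.1
      have hχ₀q' : Formula.relabel (ea n a) χ₀ ∈ q'.1.1 := by
        have e1 : e q ⟨Formula.relabel (ea n a) χ₀, hBF.relabelF _⟩ = true :=
          (he q _).2 hχ₀q
        rw [hee] at e1
        exact (he q' _).1 e1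
      have hχq' : Formula.relabel (ea n a) χ ∈ q'.1.1 :=
        (hqt q').mem_of_models T hM hne hχ₀q' himp
      exact (hqt q').mem_closure hχq' fun b hb => (hv _).2 hb
    intro q q' h
    have hee : e q = e q' := congrArg Prod.fst h
    exact Subtype.ext (Subtype.ext (Set.ext fun ψ =>
      ⟨key q q' hee ψ, key q' q hee.symm ψ⟩))
  -- clopen coordinate sets in the subspace
  have hqclopen : ∀ φ : {φ : L.Formula (↥A ⊕ Fin n) // Sl.IsBForm φ},
      IsClopen {q : {p : ↥(SnAt T A n) // p.1 ∈ SnAtIn T Sl A n} | e q φ = true} := by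
    intro φ
    constructor
    · rw [← isOpen_compl_iff]
      have hset : ({q : {p : ↥(SnAt T A n) // p.1 ∈ SnAtIn T Sl A n} | e q φ = true} : Set _)ᶜ =
          (fun q : {p : ↥(SnAt T A n) // p.1 ∈ SnAtIn T Sl A n} => (q.1 : ↥(SnAt T A n))) ⁻¹'
            {pp : ↥(SnAt T A n) | φ.1.not ∈ pp.1} := by
        ext q
        simp only [Set.mem_compl_iff, Set.mem_setOf_eq, Set.mem_preimage]
        rw [he]
        exact ⟨fun h => (hqt q).not_mem_iff'.2 h, fun h => (hqt q).not_mem_iff'.1 h⟩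
      rw [hset]
      exact (isOpen_basic T _).preimage continuous_subtype_val
    · have hset : {q : {p : ↥(SnAt T A n) // p.1 ∈ SnAtIn T Sl A n} | e q φ = true} =
          (fun q : {p : ↥(SnAt T A n) // p.1 ∈ SnAtIn T Sl A n} => (q.1 : ↥(SnAt T A n))) ⁻¹'
            {pp : ↥(SnAt T A n) | φ.1 ∈ pp.1} := by
        ext q
        simp only [Set.mem_setOf_eq, Set.mem_preimage]
        rw [he]
      rw [hset]
      exact (isOpen_basic T _).preimage continuous_subtype_val
  have hcontE : Continuous e := by
    refine continuous_pi fun φ => continuous_of_discrete_rng' fun y => ?_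
    cases y with
    | true =>
      have hset : (fun q => e q φ) ⁻¹' {true} = {q | e q φ = true} := by
        ext q; simp
      rw [hset]
      exact (hqclopen φ).2
    | false =>
      have hset : (fun q => e q φ) ⁻¹' {false} = ({q | e q φ = true} : Set _)ᶜ := by
        ext q
        simp only [Set.mem_preimage, Set.mem_singleton_iff, Set.mem_compl_iff,
          Set.mem_setOf_eq]
        cases e q φ <;> simp
      rw [hset]
      exact (hqclopen φ).compl.2
  have hGoodS : ∀ i k, IsClopen {q : {p : ↥(SnAt T A n) // p.1 ∈ SnAtIn T Sl A n} |
      Good i k (e q)} :=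
    fun i k => goodClopen _ e hqclopen i k
  have hcontσ : Continuous σ := by
    refine continuous_pi fun i => continuous_of_discrete_rng' fun k => ?_
    have hset : (fun q => σ q i) ⁻¹' {k} = {q | Good i k (e q)} ∩
        ⋂ j ∈ Finset.range k, ({q | Good i j (e q)} : Set _)ᶜ := by
      ext q
      simp only [Set.mem_preimage, Set.mem_singleton_iff, Set.mem_inter_iff,
        Set.mem_setOf_eq, Set.mem_iInter, Set.mem_compl_iff, Finset.mem_range]
      constructor
      · rintro rfl
        exact ⟨hσ1 q i, fun j hj => hσ2 q i j hj⟩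
      · rintro ⟨h1, h2⟩
        exact le_antisymm (Nat.sInf_le h1) (not_lt.1 fun hlt => h2 _ hlt (hσ1 q i))
    rw [hset]
    exact (hGoodS i k).2.inter (isOpen_biInter_finset fun j _ => (hGoodS i j).compl.2)
  have hcontΨ : Continuous Ψ := hcontE.prodMk hcontσ
  -- Ψ is inducing
  have hind : IsInducing Ψ := by
    constructor
    refine le_antisymm (continuous_iff_le_induced.1 hcontΨ) ?_
    have hts : (instTopologicalSpaceSubtype :
        TopologicalSpace {p : ↥(SnAt T A n) // p.1 ∈ SnAtIn T Sl A n}) =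
        TopologicalSpace.generateFrom
          ((Set.preimage (Subtype.val : {p : ↥(SnAt T A n) // p.1 ∈ SnAtIn T Sl A n} →
            ↥(SnAt T A n))) ''
            {U | ∃ ψ : L.Formula (↥A ⊕ Fin n), U = {pp : ↥(SnAt T A n) | ψ ∈ pp.1}}) := by
      show TopologicalSpace.induced _ (TopologicalSpace.generateFrom _) = _
      exact induced_generateFrom_eq
    rw [hts, TopologicalSpace.le_generateFrom_iff_subset_isOpen]
    rintro U ⟨V, ⟨ψ, rfl⟩, rfl⟩
    rw [Set.mem_setOf_eq, isOpen_induced_iff]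
    refine ⟨⋃ (φ : {φ : L.Formula (↥A ⊕ Fin n) // Sl.IsBForm φ})
      (_ : ∀ q' : {p : ↥(SnAt T A n) // p.1 ∈ SnAtIn T Sl A n},
        e q' φ = true → ψ ∈ q'.1.1), {x | x.1 φ = true}, ?_, ?_⟩
    · exact isOpen_iUnion fun φ => isOpen_iUnion fun _ => (hCoordF φ).2
    · ext q
      simp only [Set.mem_preimage, Set.mem_iUnion, Set.mem_setOf_eq]
      constructor
      · rintro ⟨φ, h, hq⟩
        exact h q hq
      · intro hq
        obtain ⟨m, a, χ, hv⟩ := exists_fin_repr (M := N) ψ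
        obtain ⟨χ₀, hBF, hiso⟩ := q.2.2 m a
        have hχq : Formula.relabel (ea n a) χ ∈ q.1.1 :=
          (hqt q).mem_closure hq fun b hb => (hv _).1 hb
        have himp : T ⊨ᵇ χ₀.imp χ := hiso.2 χ hχq
        refine ⟨⟨Formula.relabel (ea n a) χ₀, hBF.relabelF _⟩, ?_, (he q _).2 hiso.1⟩
        intro q' hq'
        have hχ₀q' : Formula.relabel (ea n a) χ₀ ∈ q'.1.1 := (he q' _).1 hq'
        have hχq' : Formula.relabel (ea n a) χ ∈ q'.1.1 :=
          (hqt q').mem_of_models T hM hne hχ₀q' himp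
        exact (hqt q').mem_closure hχq' fun b hb => (hv _).2 hb
  have hrange : Set.range Ψ = H := by
    apply Set.Subset.antisymm
    · rintro x ⟨q, rfl⟩
      exact hrange_sub q
    · intro x hx
      obtain ⟨q, hq⟩ := hrange_sup x hx
      exact ⟨q, hq⟩
  have hce : IsClosedEmbedding Ψ := ⟨⟨hind, hinj⟩, by rw [hrange]; exact hHclosed⟩
  haveI : TopologicalSpace.SeparableSpace (({φ : L.Formula (↥A ⊕ Fin n) // Sl.IsBForm φ} → Bool) ×
      ((Σ m : ℕ, (Fin m → ↥A)) → ℕ)) := inferInstance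
  exact hce.polishSpace

end Aux19

/-- For an atomic set `A` and `β ∈ C₀`, the space `S^{n,β}_{at}(A)` is
a closed subset of `S^n_{at}(A)`, and (with the subspace topology) is Polish or empty. -/
theorem statement19 {L : FirstOrder.Language.{u, v}} (T : L.Theory)
    (hcomp : T.IsComplete) (hcard : L.card = Cardinal.aleph 1)
    (hatomic : ∃ N : Theory.ModelType.{u, v, max u v} T, IsAtomicModel T N)
    (F : Filtration L) (C₀ : Set Ordinal.{0}) (hsuit : SuitableClub T F C₀)
    (β : Ordinal.{0}) (hβ : β ∈ C₀)
    (M : Type (max u v)) [L.Structure M] (hM : M ⊨ T)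
    (A : Set M) (hA : IsAtomicSet T A) (n : ℕ) :
    IsClosed {p : ↥(SnAt T A n) | p.1 ∈ SnAtIn T (F.sub β) A n} ∧
    (SnAtIn T (F.sub β) A n = ∅ ∨
      PolishSpace {p : ↥(SnAt T A n) // p.1 ∈ SnAtIn T (F.sub β) A n}) := by
  classical
  have hSlct : (F.sub β).Countable' := F.countable β (Set.mem_Iio.mp (hsuit.1.1 hβ))
  by_cases hMne : Nonempty M
  · constructor
    · exact isClosed_snAtIn T hM hMne (F.sub β)
    · exact Or.inr (polishSpace_snAtIn T hM hMne hA.1 hSlct)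
  · have hMe : IsEmpty M := not_nonempty_iff.1 hMne
    haveI := subsingleton_snAt_of_isEmpty T (A := A) (n := n) hMe
    constructor
    · exact isClosed_of_subsingleton' _
    · by_cases hSe : SnAtIn T (F.sub β) A n = ∅
      · exact Or.inl hSe
      · right
        haveI := discreteTopology_of_subsingleton'
          (X := {p : ↥(SnAt T A n) // p.1 ∈ SnAtIn T (F.sub β) A n})
        infer_instance

end
end AbsPaper
end
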